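/- arXiv:2407.17358 — 6 statements merged into one kernel-verified Lean document; each statement's English description precedes it below -/
import Mathlib

section
/- Let X_1, ..., X_n be i.i.d. real-valued random variables with common distribution P_X, and let X denote a generic sample. Fix q ∈ (0,1) and ε ∈ (0,1), and define the q-quantile R_q = inf{ r ∈ ℝ : Pr[X ≤ r] ≥ 1 − q }. Define r_n = (1.4·log log(2.1 n) + log(10/ε)) / n and q* = q − 1.5·√(q(1−q)·r_n) − 0.8·r_n, and assume 1 ≤ ⌊n(1−q*)⌋ ≤ n. Let R̂_{q*} be the ⌊n(1−q*)⌋-th smallest element of {X_1, ..., X_n}. Then Pr[ R_q ≤ R̂_{q*} ] ≥ 1 − ε; that is, R̂_{q*} is a one-sided upper (1−ε)-confidence bound for the q-quantile R_q. -/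
open MeasureTheory ProbabilityTheory Real Set

/-- The `k`-th smallest element (k-th order statistic, 1-indexed) of a list of reals. -/
noncomputable def kthSmallest (l : List ℝ) (k : ℕ) : ℝ :=
  (List.insertionSort (· ≤ ·) l).getD (k - 1) 0

/-- The `q`-quantile of a real-valued distribution `μ`:
`R_q = inf { r : ℝ | Pr[X ≤ r] ≥ 1 - q }`. -/
noncomputable def qQuantile (μ : Measure ℝ) (q : ℝ) : ℝ :=
  sInf {r : ℝ | (μ (Set.Iic r)).toReal ≥ 1 - q}

lemma exp_neg_le_quad {y : ℝ} (hy : 0 ≤ y) : Real.exp (-y) ≤ 1 - y + y^2/2 := by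
  have hmono : Monotone (fun y : ℝ => 1 - y + y^2/2 - Real.exp (-y)) := by
    apply monotone_of_deriv_nonneg
    · fun_prop
    · intro x
      have : HasDerivAt (fun y : ℝ => 1 - y + y^2/2 - Real.exp (-y))
          (-1 + x - (Real.exp (-x) * (-1))) x := by
        have h1 : HasDerivAt (fun y : ℝ => Real.exp (-y)) (Real.exp (-x) * (-1)) x :=
          (Real.hasDerivAt_exp (-x)).comp x (hasDerivAt_neg x)
        have h2 : HasDerivAt (fun y : ℝ => 1 - y + y^2/2) (-1 + x) x := by
          have := ((hasDerivAt_id x).const_sub 1).fun_add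
            (((hasDerivAt_pow 2 x)).div_const 2)
          simpa [mul_comm] using this
        exact h2.sub h1
      rw [this.deriv]
      nlinarith [Real.add_one_le_exp (-x)]
  have h0 : (fun y : ℝ => 1 - y + y^2/2 - Real.exp (-y)) 0 = 0 := by simp
  have := hmono hy
  simp only [h0] at this
  linarith [this]

lemma quad_le_exp {x : ℝ} (hx : 0 ≤ x) : 1 + x + x^2/2 ≤ Real.exp x := by
  have := Real.sum_le_exp_of_nonneg hx 3
  simp [Finset.sum_range_succ] at this
  convert this using 1 <;> ring_nf

lemma exp_interp {x l : ℝ} (h0 : 0 ≤ x) (h1 : x ≤ 1) : Real.exp (l * x) ≤ 1 + x * (Real.exp l - 1) := by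
  have := convexOn_exp.2 (Set.mem_univ 0) (Set.mem_univ l) (by linarith : (0:ℝ) ≤ 1 - x) h0 (by ring)
  simp only [smul_eq_mul, mul_zero, Real.exp_zero, mul_one] at this
  calc Real.exp (l * x) = Real.exp ((1-x) * 0 + x * l) := by ring_nf
    _ ≤ (1-x) * 1 + x * Real.exp l := by simpa using this
    _ = 1 + x * (Real.exp l - 1) := by ring

lemma bennett_pointwise {x l : ℝ} (h0 : 0 ≤ x) (h1 : x ≤ 1) (hl : 0 ≤ l) :
    Real.exp (l * x) ≤ 1 + l * x + x^2 * (Real.exp l - l - 1) := by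
  have hmono : Monotone (fun l : ℝ => 1 + l*x + x^2 * (Real.exp l - l - 1) - Real.exp (l*x)) := by
    apply monotone_of_deriv_nonneg
    · fun_prop
    · intro t
      have h1d : HasDerivAt (fun l : ℝ => Real.exp (l * x)) (Real.exp (t*x) * x) t := by
        simpa [Function.comp_def] using (Real.hasDerivAt_exp (t*x)).comp t ((hasDerivAt_id t).mul_const x)
      have h2d : HasDerivAt (fun l : ℝ => 1 + l*x + x^2 * (Real.exp l - l - 1))
          (x + x^2 * (Real.exp t - 1)) t := by
        have ha : HasDerivAt (fun l : ℝ => 1 + l*x) x t := by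
          simpa using (hasDerivAt_id t).mul_const x |>.const_add 1
        have hb : HasDerivAt (fun l : ℝ => Real.exp l - l - 1) (Real.exp t - 1) t := by
          simpa using ((Real.hasDerivAt_exp t).sub (hasDerivAt_id t)).sub_const 1
        simpa using ha.fun_add (hb.const_mul (x^2))
      rw [(h2d.fun_sub h1d).deriv]
      have := exp_interp h0 h1 (l := t)
      nlinarith [this, sq_nonneg x]
  have h0' : (fun l : ℝ => 1 + l*x + x^2 * (Real.exp l - l - 1) - Real.exp (l*x)) 0 = 0 := by simp
  have := hmono hl
  rw [h0'] at this
  dsimp only at this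
  linarith

lemma nonneg_of_monoIci (f : ℝ → ℝ) (hc : ContinuousOn f (Ici 0))
    (hd : ∀ x ∈ Ioi (0:ℝ), HasDerivAt f (deriv f x) x)
    (hd0 : ∀ x ∈ Ioi (0:ℝ), 0 ≤ deriv f x) (h0 : f 0 = 0) {y : ℝ} (hy : 0 ≤ y) : 0 ≤ f y := by
  have hmono : MonotoneOn f (Ici 0) := by
    apply monotoneOn_of_deriv_nonneg (convex_Ici 0) hc
    · intro x hx
      rw [interior_Ici] at hx
      exact (hd x hx).differentiableAt.differentiableWithinAt
    · intro x hx
      rw [interior_Ici] at hx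
      exact hd0 x hx
  have := hmono (self_mem_Ici) hy hy
  rw [h0] at this; exact this

lemma bern_h_bound {l : ℝ} (hl : 0 ≤ l) : (2 - 2*l/3) * (Real.exp l - l - 1) ≤ l^2 := by
  have hg : ∀ t : ℝ, 0 ≤ t → 0 ≤ 1 + Real.exp t * (t - 1) := by
    intro t ht
    have hder : ∀ x : ℝ, HasDerivAt (fun t => 1 + Real.exp t * (t - 1)) (x * Real.exp x) x := by
      intro x
      have := ((Real.hasDerivAt_exp x).mul ((hasDerivAt_id x).sub_const 1)).const_add 1
      convert this using 1 <;> (try simp only [id_eq]) <;> (try rfl) <;> ring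
    refine nonneg_of_monoIci (fun t => 1 + Real.exp t * (t - 1)) (by fun_prop)
      (fun x _ => by rw [(hder x).deriv]; exact hder x) (fun x hx => ?_) (by simp) ht
    rw [(hder x).deriv]
    exact mul_nonneg (le_of_lt hx) (Real.exp_pos x).le
  have hpsi : ∀ t : ℝ, 0 ≤ t → 0 ≤ t + 2 + Real.exp t * (t - 2) := by
    intro t ht
    have hder : ∀ x : ℝ, HasDerivAt (fun t => t + 2 + Real.exp t * (t - 2))
        (1 + Real.exp x * (x - 1)) x := by
      intro x
      have := (((hasDerivAt_id x).add_const 2).add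
        ((Real.hasDerivAt_exp x).mul ((hasDerivAt_id x).sub_const 2)))
      convert this using 1 <;> (try simp only [id_eq]) <;> (try rfl) <;> ring
    refine nonneg_of_monoIci (fun t => t + 2 + Real.exp t * (t - 2)) (by fun_prop)
      (fun x _ => by rw [(hder x).deriv]; exact hder x) (fun x hx => ?_) (by norm_num) ht
    rw [(hder x).deriv]
    exact hg x (le_of_lt hx)
  have hphi : 0 ≤ l^2 - (2 - 2*l/3) * (Real.exp l - l - 1) := by
    have hder : ∀ x : ℝ, HasDerivAt (fun t => t^2 - (2 - 2*t/3) * (Real.exp t - t - 1))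
        ((2/3) * (x + 2 + Real.exp x * (x - 2))) x := by
      intro x
      have h1 : HasDerivAt (fun t : ℝ => t^2) (2*x) x := by simpa using hasDerivAt_pow 2 x
      have h2 : HasDerivAt (fun t : ℝ => (2 - 2*t/3)) (-(2/3)) x := by
        have := (((hasDerivAt_id x).const_mul 2).div_const 3).const_sub 2
        convert this using 1 <;> (try simp only [id_eq]) <;> (try rfl) <;> ring
      have h3 : HasDerivAt (fun t : ℝ => Real.exp t - t - 1) (Real.exp x - 1) x := by
        simpa using ((Real.hasDerivAt_exp x).sub (hasDerivAt_id x)).sub_const 1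
      have := h1.sub (h2.mul h3)
      convert this using 1 <;> (try simp only [id_eq]) <;> (try rfl) <;> ring
    refine nonneg_of_monoIci (fun t => t^2 - (2 - 2*t/3) * (Real.exp t - t - 1)) (by fun_prop)
      (fun x _ => by rw [(hder x).deriv]; exact hder x) (fun x hx => ?_) (by norm_num) hl
    rw [(hder x).deriv]
    have := hpsi x (le_of_lt hx)
    linarith
  linarith

/-- Bennett-type mgf bound for a Bernoulli(1-q). -/
lemma bennett_mgf {q l : ℝ} (hq0 : 0 ≤ q) (hq1 : q ≤ 1) (hl : 0 ≤ l) :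
    q + (1-q) * Real.exp l ≤ Real.exp ((1-q)*l + q*(1-q)*(Real.exp l - l - 1)) := by
  obtain ⟨p, hp⟩ : ∃ p, p = 1 - q := ⟨_, rfl⟩
  rw [← hp]
  have hp0 : 0 ≤ p := by rw [hp]; linarith
  have hp1 : p ≤ 1 := by rw [hp]; linarith
  obtain ⟨h, hh⟩ : ∃ h, h = Real.exp l - l - 1 := ⟨_, rfl⟩
  rw [← hh]
  have hhnn : 0 ≤ h := by have := Real.add_one_le_exp l; rw [hh]; linarith
  have hhalf : l^2/2 ≤ h := by have := quad_le_exp hl; rw [hh]; linarith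
  have key : q * Real.exp (-(p*l)) + p * Real.exp (l*q) ≤ 1 + p*q*h := by
    have h1 : Real.exp (-(p*l)) ≤ 1 - p*l + p^2*h := by
      have h0 := exp_neg_le_quad (mul_nonneg hp0 hl)
      have hstep : (p*l)^2/2 ≤ p^2*h := by
        calc (p*l)^2/2 = p^2*(l^2/2) := by ring
          _ ≤ p^2*h := mul_le_mul_of_nonneg_left hhalf (sq_nonneg p)
      linarith
    have h2 : Real.exp (l*q) ≤ 1 + l*q + q^2*h := by
      rw [hh]; exact bennett_pointwise hq0 hq1 hl
    have e3 : q * (1 - p*l + p^2*h) + p * (1 + l*q + q^2*h) = 1 + p*q*h := by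
      rw [hp]; ring
    nlinarith [mul_le_mul_of_nonneg_left h1 hq0, mul_le_mul_of_nonneg_left h2 hp0]
  have hmul := mul_le_mul_of_nonneg_left key (Real.exp_pos (p*l)).le
  have e1 : Real.exp (p*l) * (q * Real.exp (-(p*l)) + p * Real.exp (l*q)) = q + p * Real.exp l := by
    rw [mul_add, ← mul_assoc, ← mul_assoc, mul_comm (Real.exp (p*l)) q,
      mul_comm (Real.exp (p*l)) p, mul_assoc q, mul_assoc p, ← Real.exp_add, ← Real.exp_add,
      add_neg_cancel, Real.exp_zero, mul_one, show p*l + l*q = l by rw [hp]; ring]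
  rw [e1] at hmul
  calc q + p * Real.exp l ≤ Real.exp (p*l) * (1 + p*q*h) := hmul
    _ ≤ Real.exp (p*l) * Real.exp (p*q*h) := by
        apply mul_le_mul_of_nonneg_left _ (Real.exp_pos _).le
        linarith [Real.add_one_le_exp (p*q*h)]
    _ = Real.exp (p*l + q*p*h) := by rw [← Real.exp_add]; ring_nf

lemma core_numeric {W L R t : ℝ} (hW : 0 < W) (hR : 0 < R) (hL : 1.3 + R ≤ L)
    (ht : 1.5 * Real.sqrt (W*L) + 0.8*L - 1 ≤ t) :
    ∃ l : ℝ, 0 ≤ l ∧ R ≤ l*t - W*(Real.exp l - l - 1) := by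
  have hL0 : (0:ℝ) < L := by linarith
  set s := Real.sqrt (W*L) with hs
  have hs0 : 0 ≤ s := Real.sqrt_nonneg _
  have hs2 : s^2 = W*L := Real.sq_sqrt (by positivity)
  have hb : (0:ℝ) ≤ 0.8*L - 1 := by linarith
  have ht0 : 0 < t := by nlinarith
  obtain ⟨D, hD⟩ : ∃ D, D = W + t/3 := ⟨_, rfl⟩
  have hD0 : 0 < D := by rw [hD]; linarith
  refine ⟨t/D, by positivity, ?_⟩
  obtain ⟨l, hl⟩ : ∃ l, l = t/D := ⟨_, rfl⟩
  rw [← hl]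
  have hl0 : 0 ≤ l := by rw [hl]; positivity
  have hlD : l * D = t := by rw [hl]; exact div_mul_cancel₀ t (ne_of_gt hD0)
  have hl3 : l < 3 := by
    rw [hl, div_lt_iff₀ hD0, hD]; linarith
  have hfac : (2 - 2*l/3) * D = 2*W := by
    linear_combination (-(2:ℝ)/3)*hlD + 2*hD
  have hhb := bern_h_bound hl0
  have hWh : W * (Real.exp l - l - 1) ≤ l^2 * D / 2 := by
    have h2 : ((2 - 2*l/3) * (Real.exp l - l - 1)) * (D/2) ≤ l^2 * (D/2) :=
      mul_le_mul_of_nonneg_right hhb (by positivity)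
    calc W * (Real.exp l - l - 1) = ((2 - 2*l/3) * (Real.exp l - l - 1)) * (D/2) := by
          linear_combination (-(Real.exp l - l - 1)/2) * hfac
      _ ≤ l^2 * (D/2) := h2
      _ = l^2 * D / 2 := by ring
  have hmain : (L - 1.3) * (2*W + (2/3)*t) ≤ t^2 := by
    nlinarith [sq_nonneg (t - (1.5*s + 0.8*L - 1)), mul_nonneg hs0 hb,
      mul_nonneg (mul_nonneg hs0 hs0) hb, sq_nonneg s, sq_nonneg (0.8*L-1),
      mul_nonneg hs0 (le_of_lt hR), mul_nonneg hb (le_of_lt hR)]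
  have hmain2 : (L - 1.3) * (2*D) ≤ (l*D)^2 := by
    rw [hlD, hD]; nlinarith [hmain]
  have hfin : R ≤ l^2 * D / 2 := by
    nlinarith [hmain2, hD0, mul_pos hD0 hD0]
  have : l * t = l^2 * D := by rw [← hlD]; ring
  linarith

lemma const_bound {n : ℕ} (hn : 1 ≤ n) : (1.3:ℝ) ≤ 1.4 * Real.log (Real.log (2.1 * n)) + Real.log 10 := by
  have hlog2 : (0.6931471803:ℝ) < Real.log 2 := Real.log_two_gt_d9
  have hn1 : (1:ℝ) ≤ (n:ℝ) := by exact_mod_cast hn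
  have ha : (0.6931471803:ℝ) < Real.log (2.1 * n) := by
    calc (0.6931471803:ℝ) < Real.log 2 := hlog2
      _ ≤ Real.log (2.1 * n) := Real.log_le_log (by norm_num) (by nlinarith)
  have h10 : 3 * Real.log 2 ≤ Real.log 10 := by
    have : Real.log (2^3) ≤ Real.log 10 := Real.log_le_log (by positivity) (by norm_num)
    rw [Real.log_pow] at this; push_cast at this; linarith
  have ha0 : (0:ℝ) < Real.log (2.1 * n) := by linarith
  have hll : 1 - (Real.log (2.1 * n))⁻¹ ≤ Real.log (Real.log (2.1 * n)) :=
    Real.one_sub_inv_le_log_of_pos ha0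
  have hinv : (Real.log (2.1 * n))⁻¹ ≤ (0.6931471803:ℝ)⁻¹ := by
    apply inv_anti₀ (by norm_num) ha.le
  have : (1:ℝ) - (0.6931471803:ℝ)⁻¹ ≤ Real.log (Real.log (2.1 * n)) := by linarith
  nlinarith [this, h10, hlog2]


lemma quantile_Iio_le (μ : Measure ℝ) [IsProbabilityMeasure μ] {q : ℝ}
    (hq0 : 0 < q) (hq1 : q < 1) :
    μ (Set.Iio (qQuantile μ q)) ≤ ENNReal.ofReal (1 - q) := by
  set S := {r : ℝ | (μ (Set.Iic r)).toReal ≥ 1 - q} with hS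
  -- there is r₀ with measure of Iic r₀ < 1 - q
  obtain ⟨r₀, hr₀⟩ : ∃ r₀ : ℝ, (μ (Set.Iic r₀)).toReal < 1 - q := by
    by_contra hcon
    push_neg at hcon
    -- then μ (Iic (-m)) ≥ 1 - q for all m, but ⋂ Iic (-m) = ∅
    have hanti : Antitone (fun m : ℕ => Set.Iic (-(m:ℝ))) := by
      intro a b hab x hx
      simp only [Set.mem_Iic] at hx ⊢
      have : (a:ℝ) ≤ b := by exact_mod_cast hab
      linarith
    have hint : ⋂ m : ℕ, Set.Iic (-(m:ℝ)) = (∅ : Set ℝ) := by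
      ext x
      simp only [Set.mem_iInter, Set.mem_Iic, Set.mem_empty_iff_false, iff_false, not_forall,
        not_le]
      obtain ⟨m, hm⟩ := exists_nat_gt (-x)
      exact ⟨m, by linarith⟩
    have htend := tendsto_measure_iInter_atTop (ι := ℕ) (μ := μ)
      (fun m => (measurableSet_Iic : MeasurableSet (Set.Iic (-(m:ℝ)))).nullMeasurableSet)
      hanti ⟨0, measure_ne_top _ _⟩
    rw [hint] at htend
    simp only [measure_empty] at htend
    have hlow : ∀ m : ℕ, ENNReal.ofReal (1 - q) ≤ μ (Set.Iic (-(m:ℝ))) := by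
      intro m
      have := hcon (-(m:ℝ))
      rw [← ENNReal.ofReal_toReal (measure_ne_top μ (Set.Iic (-(m:ℝ))))]
      exact ENNReal.ofReal_le_ofReal this
    have := ge_of_tendsto htend (Filter.Eventually.of_forall hlow)
    simp only [le_zero_iff, ENNReal.ofReal_eq_zero] at this
    linarith
  have hbdd : BddBelow S := by
    refine ⟨r₀, fun r hr => ?_⟩
    by_contra hlt
    push_neg at hlt
    have hmono : μ (Set.Iic r) ≤ μ (Set.Iic r₀) := measure_mono (Set.Iic_subset_Iic.2 hlt.le)
    have : (μ (Set.Iic r)).toReal ≤ (μ (Set.Iic r₀)).toReal :=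
      ENNReal.toReal_mono (measure_ne_top _ _) hmono
    have hrS : (μ (Set.Iic r)).toReal ≥ 1 - q := hr
    linarith
  -- every r < qQuantile μ q has μ (Iic r) < 1 - q hence ≤ ofReal (1-q)
  have hlt : ∀ r : ℝ, r < qQuantile μ q → μ (Set.Iic r) ≤ ENNReal.ofReal (1 - q) := by
    intro r hr
    have hnotS : r ∉ S := fun hrS => absurd (csInf_le hbdd hrS) (not_le.2 hr)
    simp only [hS, Set.mem_setOf_eq, not_le, ge_iff_le] at hnotS
    rw [← ENNReal.ofReal_toReal (measure_ne_top μ (Set.Iic r))]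
    exact ENNReal.ofReal_le_ofReal hnotS.le
  -- Iio (qQuantile) = ⋃ k, Iic (qQuantile - 1/(k+1))
  set Rq := qQuantile μ q with hRq
  have hunion : Set.Iio Rq = ⋃ k : ℕ, Set.Iic (Rq - 1/((k:ℝ)+1)) := by
    ext x
    simp only [Set.mem_Iio, Set.mem_iUnion, Set.mem_Iic]
    constructor
    · intro hx
      obtain ⟨k, hk⟩ := exists_nat_one_div_lt (show 0 < Rq - x by linarith)
      exact ⟨k, by linarith⟩
    · rintro ⟨k, hk⟩
      have : (0:ℝ) < 1/((k:ℝ)+1) := by positivity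
      linarith
  have hmono2 : Monotone (fun k : ℕ => Set.Iic (Rq - 1/((k:ℝ)+1))) := by
    intro a b hab x hx
    simp only [Set.mem_Iic] at hx ⊢
    have h1 : ((a:ℝ)+1) ≤ ((b:ℝ)+1) := by exact_mod_cast Nat.succ_le_succ hab
    have h2 : 1/((b:ℝ)+1) ≤ 1/((a:ℝ)+1) := by
      apply one_div_le_one_div_of_le (by positivity) h1
    linarith
  have htend2 := tendsto_measure_iUnion_atTop (μ := μ) hmono2
  rw [← hunion] at htend2
  apply le_of_tendsto' htend2
  intro k
  apply hlt
  have : (0:ℝ) < 1/((k:ℝ)+1) := by positivity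
  linarith


lemma count_ge_of_kth_lt {n k : ℕ} (hk1 : 1 ≤ k) (hkn : k ≤ n) (f : Fin n → ℝ) (c : ℝ)
    (h : kthSmallest (List.ofFn f) k < c) :
    (k:ℝ) ≤ ∑ i : Fin n, (if f i < c then (1:ℝ) else 0) := by
  classical
  set l := List.ofFn f with hl
  set sl := List.insertionSort (· ≤ ·) l with hsl
  have hlen : sl.length = n := by
    rw [hsl, List.length_insertionSort, hl, List.length_ofFn]
  have hkl : k - 1 < sl.length := by omega
  have hkth : kthSmallest l k = sl.get ⟨k - 1, hkl⟩ := by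
    rw [kthSmallest, ← hsl, List.getD_eq_getElem (hn := hkl), List.get_eq_getElem]
  have hsorted : sl.Pairwise (· ≤ ·) := List.pairwise_insertionSort _ l
  -- all of the first k entries of sl are < c
  have hfirst : ∀ j : Fin sl.length, (j : ℕ) < k → sl.get j < c := by
    intro j hj
    have : sl.get j ≤ sl.get ⟨k - 1, hkl⟩ := by
      apply hsorted.rel_get_of_le
      simp only [Fin.mk_le_mk, Fin.le_def]
      omega
    rw [hkth] at h
    linarith
  -- hence countP is at least k
  have hcount : k ≤ sl.countP (fun x => decide (x < c)) := by
    have htake : ∀ x ∈ sl.take k, decide (x < c) = true := by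
      intro x hx
      obtain ⟨j, hjlen, hjx⟩ := List.getElem_of_mem hx
      have hjlt : j < k := by
        have := List.length_take (i := k) (l := sl)
        omega
      rw [List.getElem_take] at hjx
      simp only [decide_eq_true_eq]
      rw [← hjx]
      have hjl : j < sl.length := by omega
      exact hfirst ⟨j, hjl⟩ hjlt
    have h1 : (sl.take k).countP (fun x => decide (x < c)) = (sl.take k).length :=
      List.countP_eq_length.mpr htake
    have h2 : (sl.take k).length = k := by
      rw [List.length_take]; omega
    have h3 := (List.take_sublist k sl).countP_le (p := fun x => decide (x < c))
    omega
  -- transfer to the unsorted list / finset count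
  have hperm : (↑sl : Multiset ℝ) = (↑l : Multiset ℝ) :=
    Multiset.coe_eq_coe.mpr (List.perm_insertionSort _ l)
  have hcount2 : k ≤ Multiset.countP (fun x => x < c) (↑l : Multiset ℝ) := by
    rw [← hperm]
    rw [Multiset.coe_countP]
    convert hcount using 2
  have hofn : (↑l : Multiset ℝ) = Multiset.map f (Finset.univ.val) := by
    rw [hl, ← Fin.univ_val_map]
  rw [hofn, Multiset.countP_map] at hcount2
  have hcard : Multiset.card (Multiset.filter (fun a => f a < c) Finset.univ.val)
      = (Finset.univ.filter (fun i => f i < c)).card := by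
    rfl
  rw [hcard] at hcount2
  rw [Finset.sum_boole]
  exact_mod_cast hcount2

set_option maxHeartbeats 2000000 in
/-- **Howard–Ramdas quantile concentration bound (Lemma 1).**
For i.i.d. real random variables `X_1, ..., X_n` with common distribution `μ`, the
`⌊n(1-q*)⌋`-th order statistic is a one-sided upper `(1-ε)`-confidence bound for the
`q`-quantile `R_q`. -/
theorem quantile_confidence_bound
    {Ω : Type*} [MeasurableSpace Ω] (P : Measure Ω) [IsProbabilityMeasure P]
    (n : ℕ) (hn : 0 < n) (X : Fin n → Ω → ℝ)
    (hmeas : ∀ i, Measurable (X i))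
    (hindep : iIndepFun X P)
    (μ : Measure ℝ) [IsProbabilityMeasure μ]
    (hident : ∀ i, Measure.map (X i) P = μ)
    (q ε : ℝ) (hq : q ∈ Set.Ioo (0 : ℝ) 1) (hε : ε ∈ Set.Ioo (0 : ℝ) 1)
    (Rq rn qstar : ℝ) (k : ℕ)
    (hRq : Rq = qQuantile μ q)
    (hrn : rn = (1.4 * Real.log (Real.log (2.1 * n)) + Real.log (10 / ε)) / n)
    (hqstar : qstar = q - 1.5 * Real.sqrt (q * (1 - q) * rn) - 0.8 * rn)
    (hk : k = ⌊(n : ℝ) * (1 - qstar)⌋₊)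
    (hk1 : 1 ≤ k) (hkn : k ≤ n) :
    P {ω | Rq ≤ kthSmallest (List.ofFn fun i => X i ω) k} ≥ ENNReal.ofReal (1 - ε) := by
  classical
  obtain ⟨hq0, hq1⟩ := hq
  obtain ⟨hε0, hε1⟩ := hε
  obtain ⟨g, hg⟩ : ∃ g : ℝ → ℝ, g = fun x => if x < Rq then 1 else 0 := ⟨_, rfl⟩
  have hgmeas : Measurable g := by
    rw [hg]; exact Measurable.ite measurableSet_Iio measurable_const measurable_const
  obtain ⟨Y, hY⟩ : ∃ Y : Fin n → Ω → ℝ, Y = fun i => g ∘ X i := ⟨_, rfl⟩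
  have hYmeas : ∀ i, Measurable (Y i) := fun i => by rw [hY]; exact hgmeas.comp (hmeas i)
  have hYindep : iIndepFun Y P := by
    rw [hY]; exact hindep.comp (fun _ => g) (fun _ => hgmeas)
  have hYval : ∀ i ω, Y i ω = if X i ω < Rq then 1 else 0 := by
    intro i ω; rw [hY, hg]; rfl
  have hn0 : (0:ℝ) < n := by exact_mod_cast hn
  obtain ⟨L, hL⟩ : ∃ L : ℝ, L = 1.4 * Real.log (Real.log (2.1 * n)) + Real.log (10 / ε) :=
    ⟨_, rfl⟩
  have hnrn : (n:ℝ) * rn = L := by rw [hrn, hL]; field_simp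
  obtain ⟨R, hR'⟩ : ∃ R : ℝ, R = - Real.log ε := ⟨_, rfl⟩
  have hRpos : 0 < R := by rw [hR']; have := Real.log_neg hε0 hε1; linarith
  have hlog10 : Real.log (10/ε) = Real.log 10 - Real.log ε :=
    Real.log_div (by norm_num) (ne_of_gt hε0)
  have hLbound : 1.3 + R ≤ L := by
    have := const_bound (n := n) hn
    rw [hL, hlog10, hR']; linarith
  obtain ⟨W, hW⟩ : ∃ W : ℝ, W = (n:ℝ) * (q * (1 - q)) := ⟨_, rfl⟩
  have hWpos : 0 < W := by rw [hW]; apply mul_pos hn0; nlinarith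
  obtain ⟨t, ht'⟩ : ∃ t : ℝ, t = (k:ℝ) - (n:ℝ)*(1-q) := ⟨_, rfl⟩
  have hsqrt : (n:ℝ) * Real.sqrt (q*(1-q)*rn) = Real.sqrt (W*L) := by
    rw [show W*L = (n:ℝ)^2 * (q*(1-q)*rn) by rw [← hnrn, hW]; ring]
    rw [Real.sqrt_mul (sq_nonneg _), Real.sqrt_sq hn0.le]
  have hkx : (n:ℝ) * (1 - qstar) < (k:ℝ) + 1 := by
    rw [hk]; exact Nat.lt_floor_add_one _
  have hts : 1.5 * Real.sqrt (W*L) + 0.8*L - 1 ≤ t := by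
    have hexp : (n:ℝ)*(1 - qstar)
        = (n:ℝ)*(1-q) + 1.5*((n:ℝ)*Real.sqrt (q*(1-q)*rn)) + 0.8*((n:ℝ)*rn) := by
      rw [hqstar]; ring
    rw [hexp, hsqrt, hnrn] at hkx
    rw [ht']; linarith
  obtain ⟨l, hl0, hlR⟩ := core_numeric hWpos hRpos hLbound hts
  -- probability that a single sample is below Rq
  have hp : ∀ i, (P (X i ⁻¹' Set.Iio Rq)).toReal ≤ 1 - q := by
    intro i
    have hmap : P (X i ⁻¹' Set.Iio Rq) = μ (Set.Iio Rq) := by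
      rw [← hident i, Measure.map_apply (hmeas i) measurableSet_Iio]
    rw [hmap]
    have h1 := quantile_Iio_le μ hq0 hq1
    rw [← hRq] at h1
    calc (μ (Set.Iio Rq)).toReal ≤ (ENNReal.ofReal (1-q)).toReal :=
          ENNReal.toReal_mono (by simp) h1
      _ = 1 - q := ENNReal.toReal_ofReal (by linarith)
  have hpnn : ∀ i, (0:ℝ) ≤ (P (X i ⁻¹' Set.Iio Rq)).toReal := fun i => ENNReal.toReal_nonneg
  -- mgf of each indicator
  have hmgf : ∀ i, mgf (Y i) P l = 1 + (Real.exp l - 1) * (P (X i ⁻¹' Set.Iio Rq)).toReal := by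
    intro i
    have hA' : MeasurableSet (X i ⁻¹' Set.Iio Rq) := (hmeas i) measurableSet_Iio
    have heq : (fun ω => Real.exp (l * Y i ω))
        = fun ω => (X i ⁻¹' Set.Iio Rq).indicator (fun _ => Real.exp l - 1) ω + 1 := by
      funext ω
      by_cases hcase : X i ω < Rq
      · rw [hYval i ω, if_pos hcase, Set.indicator_of_mem (by simpa using hcase)]
        simp
      · rw [hYval i ω, if_neg hcase, Set.indicator_of_notMem (by simpa using hcase)]
        simp
    simp only [mgf]
    rw [heq, integral_add ((integrable_const _).indicator hA') (integrable_const 1),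
      integral_indicator_const _ hA', integral_const, probReal_univ]
    simp only [smul_eq_mul, ENNReal.toReal_one, mul_one, one_mul, one_smul, Measure.real]
    ring
  have hmgfle : ∀ i, mgf (Y i) P l ≤ q + (1-q)*Real.exp l := by
    intro i
    rw [hmgf i]
    have h1 := hp i
    have h2 := hpnn i
    have h3 : (1:ℝ) ≤ Real.exp l := by
      rw [show (1:ℝ) = Real.exp 0 by simp]; exact Real.exp_le_exp.2 hl0
    nlinarith
  have hmgfnn : ∀ i, (0:ℝ) ≤ mgf (Y i) P l := by
    intro i
    rw [hmgf i]
    have h2 := hpnn i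
    have h3 : (1:ℝ) ≤ Real.exp l := by
      rw [show (1:ℝ) = Real.exp 0 by simp]; exact Real.exp_le_exp.2 hl0
    nlinarith
  -- the count
  obtain ⟨S, hS⟩ : ∃ S : Ω → ℝ, S = ∑ i, Y i := ⟨_, rfl⟩
  have hSapp : ∀ ω, S ω = ∑ i, Y i ω := by
    intro ω; rw [hS]; exact Finset.sum_apply ω Finset.univ Y
  have hSmeas : Measurable S := by
    have hfe : S = fun ω => ∑ i, Y i ω := funext hSapp
    rw [hfe]; exact Finset.measurable_sum _ (fun i _ => hYmeas i)
  have hSle : ∀ ω, S ω ≤ n := by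
    intro ω
    rw [hSapp]
    calc ∑ i, Y i ω ≤ ∑ _i : Fin n, (1:ℝ) := by
          apply Finset.sum_le_sum
          intro i _
          rw [hYval]
          split <;> norm_num
      _ = n := by simp
  have hint : Integrable (fun ω => Real.exp (l * S ω)) P := by
    apply Integrable.mono' (integrable_const (Real.exp (l * n)))
      ((hSmeas.const_mul l).exp.aestronglyMeasurable)
    filter_upwards with ω
    rw [Real.norm_eq_abs, abs_of_pos (Real.exp_pos _)]
    exact Real.exp_le_exp.2 (mul_le_mul_of_nonneg_left (hSle ω) hl0)
  have hchern := measure_ge_le_exp_mul_mgf (X := S) (μ := P) (t := l) (k:ℝ) hl0 hint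
  have hYindep' : iIndepFun Y P :=
    hYindep
  have hprod : mgf S P l = ∏ i, mgf (Y i) P l := by
    rw [hS]; exact hYindep'.mgf_sum hYmeas Finset.univ
  have hqe : (0:ℝ) ≤ q + (1-q)*Real.exp l := by nlinarith [Real.exp_pos l]
  have hprodle : ∏ i, mgf (Y i) P l ≤ (q + (1-q)*Real.exp l)^n := by
    calc ∏ i, mgf (Y i) P l ≤ ∏ _i : Fin n, (q + (1-q)*Real.exp l) :=
          Finset.prod_le_prod (fun i _ => hmgfnn i) (fun i _ => hmgfle i)
      _ = (q + (1-q)*Real.exp l)^n := by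
          rw [Finset.prod_const, Finset.card_univ, Fintype.card_fin]
  have hbenn := bennett_mgf hq0.le hq1.le hl0
  have hpow : (q + (1-q)*Real.exp l)^n
      ≤ Real.exp ((n:ℝ) * ((1-q)*l + q*(1-q)*(Real.exp l - l - 1))) := by
    rw [Real.exp_nat_mul]
    exact pow_le_pow_left₀ hqe hbenn n
  have hfinal : Real.exp (-l * k) * mgf S P l ≤ ε := by
    have hc1 : mgf S P l ≤ Real.exp ((n:ℝ) * ((1-q)*l + q*(1-q)*(Real.exp l - l - 1))) := by
      rw [hprod]; exact hprodle.trans hpow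
    calc Real.exp (-l*k) * mgf S P l
        ≤ Real.exp (-l*k) * Real.exp ((n:ℝ) * ((1-q)*l + q*(1-q)*(Real.exp l - l - 1))) :=
          mul_le_mul_of_nonneg_left hc1 (Real.exp_pos _).le
      _ = Real.exp (-(l*t - W*(Real.exp l - l - 1))) := by
          rw [← Real.exp_add]; congr 1; rw [ht', hW]; ring
      _ ≤ Real.exp (-R) := Real.exp_le_exp.2 (by linarith)
      _ = ε := by rw [hR', neg_neg, Real.exp_log hε0]
  -- events
  obtain ⟨A, hA⟩ : ∃ A : Set Ω, A = {ω | kthSmallest (List.ofFn fun i => X i ω) k < Rq} :=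
    ⟨_, rfl⟩
  have hAB : A ⊆ {ω | (k:ℝ) ≤ S ω} := by
    intro ω hω
    rw [hA, Set.mem_setOf_eq] at hω
    have hcnt := count_ge_of_kth_lt hk1 hkn (fun i => X i ω) Rq hω
    rw [Set.mem_setOf_eq, hSapp]
    calc (k:ℝ) ≤ ∑ i : Fin n, (if X i ω < Rq then (1:ℝ) else 0) := hcnt
      _ = ∑ i, Y i ω := by
          apply Finset.sum_congr rfl
          intro i _
          rw [hYval]
  have hPB : P {ω | (k:ℝ) ≤ S ω} ≤ ENNReal.ofReal ε := by
    rw [← ENNReal.ofReal_toReal (measure_ne_top P _)]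
    exact ENNReal.ofReal_le_ofReal (hchern.trans hfinal)
  have hPA : P A ≤ ENNReal.ofReal ε := (measure_mono hAB).trans hPB
  have hset : {ω | Rq ≤ kthSmallest (List.ofFn fun i => X i ω) k} = Aᶜ := by
    rw [hA]; ext ω; simp [not_lt]
  rw [ge_iff_le, hset]
  have hone : (1:ENNReal) ≤ P Aᶜ + ENNReal.ofReal ε := by
    calc (1:ENNReal) = P Set.univ := measure_univ.symm
      _ ≤ P (Aᶜ ∪ A) := measure_mono (by simp [Set.union_comm])
      _ ≤ P Aᶜ + P A := measure_union_le _ _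
      _ ≤ P Aᶜ + ENNReal.ofReal ε := add_le_add_right hPA _
  calc ENNReal.ofReal (1-ε) = 1 - ENNReal.ofReal ε := by
        rw [ENNReal.ofReal_sub _ hε0.le, ENNReal.ofReal_one]
    _ ≤ P Aᶜ := tsub_le_iff_right.mpr hone
end

section
/- Let Z_1, ..., Z_n be i.i.d. random variables with common distribution p_Z, let R(Z, λ) ∈ [0,1] be the risk of hyperparameter λ on data point Z, and let R_q(λ) = inf{ r ≥ 0 : Pr_{Z∼p_Z}[R(Z,λ) ≤ r] ≥ 1 − q } be the q-quantile risk for q ∈ (0,1). Fix ε ∈ (0,1), define r_n = (1.4·log log(2.1 n) + log(10/ε)) / n and q* = q − 1.5·√(q(1−q)·r_n) − 0.8·r_n, assume 1 ≤ ⌊n(1−q*)⌋ ≤ n, and let R̂_{q*}(λ, ε) be the ⌊n(1−q*)⌋-th smallest element of { R(Z_1,λ), ..., R(Z_n,λ) }. If the null hypothesis R_q(λ) > α holds for a threshold α ∈ (0,1), then Pr[ R̂_{q*}(λ, ε) < α ] ≤ ε. -/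
open MeasureTheory ProbabilityTheory Real Set

/-- The `q`-quantile risk of hyperparameter `lam` for risk function `R` and data
distribution `μ`: `R_q(λ) = inf { r ≥ 0 : Pr_{Z∼μ}[R(Z,λ) ≤ r] ≥ 1 - q }`. -/
noncomputable def quantileRisk {E Λ : Type*} [MeasurableSpace E]
    (μ : Measure E) (R : E → Λ → ℝ) (lam : Λ) (q : ℝ) : ℝ :=
  sInf {r : ℝ | 0 ≤ r ∧ (μ {z | R z lam ≤ r}).toReal ≥ 1 - q}

section AuxProofHelpers

open Real

lemma nonneg_of_hasDerivAt (f f' : ℝ → ℝ) (h0 : f 0 = 0)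
    (hd : ∀ t, HasDerivAt f (f' t) t) (hp : ∀ t, 0 ≤ t → 0 ≤ f' t) :
    ∀ t, 0 ≤ t → 0 ≤ f t := by
  intro t ht
  have hmono : MonotoneOn f (Set.Ici 0) := by
    apply monotoneOn_of_deriv_nonneg (convex_Ici 0)
    · exact fun x _ => (hd x).continuousAt.continuousWithinAt
    · intro x hx
      exact (hd x).differentiableAt.differentiableWithinAt
    · intro x hx
      rw [(hd x).deriv]
      rw [interior_Ici] at hx
      exact hp x (le_of_lt hx)
  have := hmono (Set.self_mem_Ici) ht ht
  linarith [h0 ▸ this]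

lemma expBound : ∀ t : ℝ, 0 ≤ t → (1 - t/3) * (Real.exp t - 1 - t) ≤ t^2/2 := by
  have h2 : ∀ t : ℝ, 0 ≤ t → 0 ≤ 1/3 + Real.exp t * (t-1) / 3 := by
    apply nonneg_of_hasDerivAt _ (fun t => Real.exp t * t / 3)
    · norm_num
    · intro t
      have h := (((Real.hasDerivAt_exp t).mul ((hasDerivAt_id t).sub_const 1)).div_const 3).const_add (1/3)
      exact h.congr_deriv (by simp only [id_eq]; ring)
    · intro t ht
      positivity
  have h1 : ∀ t : ℝ, 0 ≤ t → 0 ≤ t/3 + 2/3 + Real.exp t * (t-2) / 3 := by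
    apply nonneg_of_hasDerivAt _ (fun t => 1/3 + Real.exp t * (t-1) / 3)
    · norm_num
    · intro t
      have h := (((hasDerivAt_id t).div_const 3).add_const (2/3)).add
          (((Real.hasDerivAt_exp t).mul ((hasDerivAt_id t).sub_const 2)).div_const 3)
      exact h.congr_deriv (by simp only [id_eq]; ring)
    · exact h2
  intro t ht
  have h0 : ∀ u : ℝ, 0 ≤ u → 0 ≤ u^2/2 - (1 - u/3) * (Real.exp u - 1 - u) := by
    apply nonneg_of_hasDerivAt _ (fun t => t/3 + 2/3 + Real.exp t * (t-2) / 3)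
    · norm_num
    · intro u
      have h := ((((hasDerivAt_id u).pow 2).div_const 2).sub
          ((((hasDerivAt_const u 1).sub ((hasDerivAt_id u).div_const 3))).mul
            ((((Real.hasDerivAt_exp u).sub_const 1).sub (hasDerivAt_id u)))))
      exact h.congr_deriv (by simp only [id_eq, Pi.sub_apply, Nat.cast_ofNat]; norm_num; ring)
    · exact h1
  linarith [h0 t ht]

lemma bennett (m : ℝ) (hm0 : 0 ≤ m) (hm1 : m ≤ 1) :
    ∀ t : ℝ, 0 ≤ t →
    1 + m * (Real.exp t - 1) ≤ Real.exp (m * t + m * (1 - m) * (Real.exp t - 1 - t)) := by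
  have hD : ∀ t : ℝ, 0 < 1 + m * (Real.exp t - 1) := by
    intro t
    have h1 : (0:ℝ) < (1-m) + m * Real.exp t := by
      rcases eq_or_lt_of_le hm0 with h|h
      · rw [← h]; norm_num
      · have := mul_pos h (Real.exp_pos t); linarith
    nlinarith [h1]
  have key : ∀ t : ℝ, 0 ≤ t →
      0 ≤ m * t + m * (1 - m) * (Real.exp t - 1 - t) - Real.log (1 + m * (Real.exp t - 1)) := by
    apply nonneg_of_hasDerivAt _
      (fun t => m + m * (1 - m) * (Real.exp t - 1) - m * Real.exp t / (1 + m * (Real.exp t - 1)))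
    · simp
    · intro t
      have hinner : HasDerivAt (fun t : ℝ => 1 + m * (Real.exp t - 1)) (m * Real.exp t) t := by
        have h := (((Real.hasDerivAt_exp t).sub_const 1).const_mul m).const_add 1
        convert h using 1 <;> try ring
      have hlog := hinner.log (ne_of_gt (hD t))
      have hpoly : HasDerivAt (fun t : ℝ => m * t + m * (1 - m) * (Real.exp t - 1 - t))
          (m + m * (1 - m) * (Real.exp t - 1)) t := by
        have h := ((hasDerivAt_id t).const_mul m).add
          (((((Real.hasDerivAt_exp t).sub_const 1).sub (hasDerivAt_id t))).const_mul (m * (1 - m)))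
        exact h.congr_deriv (by ring)
      exact hpoly.sub hlog
    · intro t ht
      have hy : (1:ℝ) ≤ Real.exp t := Real.one_le_exp ht
      have hDt := hD t
      rw [sub_nonneg, div_le_iff₀ hDt]
      have h1 : 0 ≤ m^2*(1-m)*(Real.exp t - 1)^2 := mul_nonneg (mul_nonneg (sq_nonneg m) (by linarith)) (sq_nonneg _)
      nlinarith [h1]
  intro t ht
  have h := key t ht
  have := Real.exp_log (hD t)
  calc 1 + m * (Real.exp t - 1) = Real.exp (Real.log (1 + m * (Real.exp t - 1))) := this.symm
    _ ≤ Real.exp (m * t + m * (1 - m) * (Real.exp t - 1 - t)) := Real.exp_le_exp.mpr (by linarith)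

set_option maxHeartbeats 1000000 in
lemma key_ineq (n k : ℕ) (hn : 0 < n) (q ε p : ℝ)
    (hq0 : 0 < q) (hq1 : q < 1) (hε0 : 0 < ε) (hε1 : ε < 1)
    (hp0 : 0 ≤ p) (hpm : p ≤ 1 - q)
    (hk : (n:ℝ) * (1 - (q - 1.5 * Real.sqrt (q * (1-q) *
        ((1.4 * Real.log (Real.log (2.1 * n)) + Real.log (10 / ε)) / n))
      - 0.8 * ((1.4 * Real.log (Real.log (2.1 * n)) + Real.log (10 / ε)) / n))) < (k:ℝ) + 1) :
    ∃ t : ℝ, 0 < t ∧ Real.exp (-(t * k)) * (1 + (Real.exp t - 1) * p) ^ n ≤ ε := by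
  have hn0 : (0:ℝ) < n := by exact_mod_cast hn
  have hn1 : (1:ℝ) ≤ n := by exact_mod_cast hn
  set T : ℝ := 1.4 * Real.log (Real.log (2.1 * n)) + Real.log (10 / ε) with hT
  set V : ℝ := n * (q * (1 - q)) with hVdef
  set L : ℝ := -Real.log ε with hLdef
  set s : ℝ := (k:ℝ) - n * (1 - q) with hsdef
  clear_value T V L s
  -- numeric bounds on logs
  have hlog2 : (0.693:ℝ) < Real.log 2 := by
    have := Real.log_two_gt_d9; linarith
  have hl21 : Real.log 2 ≤ Real.log (2.1 * n) := by
    apply Real.log_le_log (by norm_num)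
    nlinarith
  have hllb : (-0.45:ℝ) ≤ Real.log (Real.log (2.1 * n)) := by
    have hy : (0.693:ℝ) < Real.log (2.1*n) := lt_of_lt_of_le hlog2 hl21
    have h1 : Real.log (Real.log (2.1*n))⁻¹ ≤ (Real.log (2.1*n))⁻¹ - 1 :=
      Real.log_le_sub_one_of_pos (by positivity)
    rw [Real.log_inv] at h1
    have h2 : (Real.log (2.1*n))⁻¹ ≤ 0.693⁻¹ := by
      apply inv_anti₀ (by norm_num) hy.le
    have h3 : (0.693:ℝ)⁻¹ ≤ 1.45 := by norm_num
    linarith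
  have hlog10 : (2.27:ℝ) ≤ Real.log 10 := by
    have h125 : (0.2:ℝ) ≤ Real.log 1.25 := by
      have h1 : Real.log (1.25:ℝ)⁻¹ ≤ (1.25:ℝ)⁻¹ - 1 := Real.log_le_sub_one_of_pos (by norm_num)
      rw [Real.log_inv] at h1
      linarith
    have : Real.log 10 = Real.log 2 + Real.log 2 + Real.log 2 + Real.log 1.25 := by
      rw [← Real.log_mul (by norm_num) (by norm_num), ← Real.log_mul (by norm_num) (by norm_num),
        ← Real.log_mul (by norm_num) (by norm_num)]
      norm_num
    rw [this]; linarith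
  have hL0 : 0 ≤ L := by
    rw [hLdef, neg_nonneg]
    exact Real.log_nonpos hε0.le hε1.le
  have hTL : T = 1.4 * Real.log (Real.log (2.1 * n)) + Real.log 10 + L := by
    rw [hT, hLdef, Real.log_div (by norm_num) (ne_of_gt hε0)]; ring
  have hTgeL : L + 1.64 ≤ T := by rw [hTL]; nlinarith
  have hTpos : (1.64:ℝ) ≤ T := by linarith
  have hV : 0 < V := by
    rw [hVdef]; apply mul_pos hn0; nlinarith
  -- lower bound on s
  have hsqrtVT : (n:ℝ) * Real.sqrt (q * (1-q) * (T / n)) = Real.sqrt (V * T) := by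
    have h1 : V * T = (n:ℝ)^2 * (q * (1-q) * (T / n)) := by
      rw [hVdef]; field_simp
    rw [h1, Real.sqrt_mul (sq_nonneg _), Real.sqrt_sq hn0.le]
  have hs : 1.5 * Real.sqrt (V * T) + 0.8 * T - 1 < s := by
    have hc : (n:ℝ) * (T / n) = T := by field_simp
    have hA : (n:ℝ) * (1 - (q - 1.5 * Real.sqrt (q * (1-q) * (T / n)) - 0.8 * (T / n)))
        = (n:ℝ)*(1-q) + 1.5*((n:ℝ)*Real.sqrt (q * (1-q) * (T / n))) + 0.8*((n:ℝ)*(T/n)) := by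
      ring
    rw [hc, hsqrtVT] at hA
    rw [hA] at hk
    rw [hsdef]
    linarith
  have hsq : 0 ≤ Real.sqrt (V*T) := Real.sqrt_nonneg _
  have hspos : 0 < s := by nlinarith
  -- s dominates the quadratic root
  have hL2 : Real.sqrt (2 * L * V) ≤ 1.5 * Real.sqrt (V * T) := by
    have h1 : 2 * L * V ≤ 1.5^2 * (V * T) := by nlinarith
    calc Real.sqrt (2*L*V) ≤ Real.sqrt (1.5^2 * (V*T)) := Real.sqrt_le_sqrt h1
      _ = 1.5 * Real.sqrt (V*T) := by
          rw [Real.sqrt_mul (by positivity), Real.sqrt_sq (by norm_num)]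
  have hsL : 2 * L / 3 + Real.sqrt (2 * L * V) ≤ s := by nlinarith
  have hquad : 2 * L * (V + s / 3) ≤ s ^ 2 := by
    have hb2 : Real.sqrt (2*L*V) ^ 2 = 2*L*V := Real.sq_sqrt (by positivity)
    nlinarith [Real.sqrt_nonneg (2*L*V)]
  -- choose t
  set t : ℝ := s / (V + s / 3) with htdef
  clear_value t
  have hden : 0 < V + s / 3 := by linarith
  have ht0 : 0 < t := htdef ▸ div_pos hspos hden
  have htd : t * (V + s / 3) = s := by rw [htdef]; field_simp
  have ht3 : t < 3 := by
    rw [htdef, div_lt_iff₀ hden]; linarith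
  refine ⟨t, ht0, ?_⟩
  have hexp1 : (1:ℝ) ≤ Real.exp t := Real.one_le_exp ht0.le
  -- step 1 : base ≤ exp(...)
  have hben := bennett (1 - q) (by linarith) (by linarith) t ht0.le
  have hbase : 1 + (Real.exp t - 1) * p ≤ Real.exp ((1-q) * t + q * (1-q) * (Real.exp t - 1 - t)) := by
    have h1 : 1 + (Real.exp t - 1) * p ≤ 1 + (1-q) * (Real.exp t - 1) := by nlinarith
    have h2 : (1-q) * t + (1-q) * (1 - (1-q)) * (Real.exp t - 1 - t)
        = (1-q) * t + q * (1-q) * (Real.exp t - 1 - t) := by ring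
    calc 1 + (Real.exp t - 1) * p ≤ 1 + (1-q)*(Real.exp t - 1) := h1
      _ ≤ Real.exp ((1-q) * t + (1-q) * (1 - (1-q)) * (Real.exp t - 1 - t)) := hben
      _ = _ := by rw [h2]
  have hbase0 : (0:ℝ) ≤ 1 + (Real.exp t - 1) * p := by nlinarith
  have hpow : (1 + (Real.exp t - 1) * p) ^ n
      ≤ Real.exp ((n:ℝ) * ((1-q) * t + q * (1-q) * (Real.exp t - 1 - t))) := by
    rw [Real.exp_nat_mul]
    exact pow_le_pow_left₀ hbase0 hbase n
  -- step 2 : Bernstein bound on exponent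
  have hE0 : 0 ≤ Real.exp t - 1 - t := by linarith [Real.add_one_le_exp t]
  have hVE : V * (Real.exp t - 1 - t) ≤ t * s / 2 := by
    have hb := expBound t ht0.le
    have hmul : (V + s/3) * ((1 - t/3) * (Real.exp t - 1 - t)) ≤ (V + s/3) * (t^2/2) :=
      mul_le_mul_of_nonneg_left hb hden.le
    have e1 : (V + s/3) * ((1 - t/3) * (Real.exp t - 1 - t)) = V * (Real.exp t - 1 - t) := by
      linear_combination (-(Real.exp t - 1 - t)/3) * htd
    have e2 : (V + s/3) * (t^2/2) = t * s / 2 := by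
      linear_combination (t/2) * htd
    linarith [e1 ▸ e2 ▸ hmul]
  have hts : L ≤ t * s / 2 := by
    have h2 : (t*s) * (V+s/3) = s^2 := by linear_combination s * htd
    have h1 : (2*L) * (V+s/3) ≤ (t*s) * (V+s/3) := by rw [h2]; linarith [hquad]
    have h3 := le_of_mul_le_mul_right h1 hden
    linarith
  calc Real.exp (-(t * k)) * (1 + (Real.exp t - 1) * p) ^ n
      ≤ Real.exp (-(t * k)) * Real.exp ((n:ℝ) * ((1-q) * t + q * (1-q) * (Real.exp t - 1 - t))) := by
        exact mul_le_mul_of_nonneg_left hpow (Real.exp_pos _).le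
    _ = Real.exp (-(t * s) + V * (Real.exp t - 1 - t)) := by
        rw [← Real.exp_add]; congr 1; rw [hsdef, hVdef]; ring
    _ ≤ Real.exp (-(t * s) + t * s / 2) := Real.exp_le_exp.mpr (by linarith)
    _ = Real.exp (-(t * s / 2)) := by congr 1; ring
    _ ≤ Real.exp (Real.log ε) := Real.exp_le_exp.mpr (by rw [hLdef] at hts; linarith)
    _ = ε := Real.exp_log hε0

lemma kth_count (l : List ℝ) (k : ℕ) (hk1 : 1 ≤ k) (hkl : k ≤ l.length) (α : ℝ)
    (h : kthSmallest l k < α) : k ≤ l.countP (fun x => decide (x < α)) := by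
  set ls := List.insertionSort (· ≤ ·) l with hls
  have hsort : List.Pairwise (· ≤ ·) ls := List.pairwise_insertionSort _ l
  have hperm : ls.Perm l := List.perm_insertionSort _ l
  have hlen : ls.length = l.length := hperm.length_eq
  have hklen : k ≤ ls.length := hlen ▸ hkl
  have hk1' : k - 1 < ls.length := by omega
  have hget : ls[k-1] < α := by
    have : ls.getD (k-1) 0 = ls[k-1] := List.getD_eq_getElem ls 0 hk1'
    rw [← this]; exact h
  have htake : ∀ x ∈ ls.take k, decide (x < α) = true := by
    intro x hx
    obtain ⟨i, hi, hix⟩ := List.getElem_of_mem hx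
    rw [List.getElem_take] at hix
    have hik : i < k := by
      have := hi; rw [List.length_take] at this; omega
    have hle : ls[i] ≤ ls[k-1] := by
      rcases lt_or_eq_of_le (Nat.le_sub_one_of_lt hik) with hlt | heq
      · exact List.Pairwise.rel_get_of_lt hsort (by exact_mod_cast hlt)
      · exact le_of_eq (by congr 1)
    simp only [decide_eq_true_eq]
    rw [← hix]
    exact lt_of_le_of_lt hle hget
  have hft : (ls.take k).filter (fun x => decide (x < α)) = ls.take k :=
    List.filter_eq_self.mpr htake
  have h1 : k ≤ ((ls.take k).filter (fun x => decide (x < α))).length := by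
    rw [hft, List.length_take]; omega
  have h2 : ((ls.take k).filter _).length ≤ (ls.filter (fun x => decide (x < α))).length :=
    ((List.take_sublist k ls).filter _).length_le
  have h3 : ls.countP (fun x => decide (x < α)) = l.countP (fun x => decide (x < α)) :=
    hperm.countP_eq _
  rw [← h3, List.countP_eq_length_filter]
  exact le_trans h1 h2

lemma countP_ofFn {n : ℕ} (g : Fin n → ℝ) (pr : ℝ → Bool) :
    (List.ofFn g).countP pr = (Finset.univ.filter (fun i => pr (g i))).card := by
  rw [List.ofFn_eq_map, List.countP_map]
  rw [Finset.filter, Finset.card, Fin.univ_def]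
  simp [List.countP_eq_length_filter, Multiset.filter_coe]
  rfl

end AuxProofHelpers

/-- **Type-I-error bound of the level-`ε` quantile test.**
If the null hypothesis `R_q(λ) > α` holds, then the empirical `q*`-quantile of the risks
falls below `α` with probability at most `ε`. -/
theorem quantile_test_typeI_error
    {Ω E Λ : Type*} [MeasurableSpace Ω] [MeasurableSpace E]
    (P : Measure Ω) [IsProbabilityMeasure P]
    (n : ℕ) (hn : 0 < n) (Z : Fin n → Ω → E)
    (hmeas : ∀ i, Measurable (Z i))
    (hindep : iIndepFun (m := fun _ => ‹MeasurableSpace E›) Z P)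
    (μ : Measure E) [IsProbabilityMeasure μ]
    (hident : ∀ i, Measure.map (Z i) P = μ)
    (R : E → Λ → ℝ) (hR : ∀ z lam, R z lam ∈ Set.Icc (0 : ℝ) 1)
    (lam : Λ)
    (q ε α : ℝ) (hq : q ∈ Set.Ioo (0 : ℝ) 1) (hε : ε ∈ Set.Ioo (0 : ℝ) 1)
    (hα : α ∈ Set.Ioo (0 : ℝ) 1)
    (rn qstar : ℝ) (k : ℕ)
    (hrn : rn = (1.4 * Real.log (Real.log (2.1 * n)) + Real.log (10 / ε)) / n)
    (hqstar : qstar = q - 1.5 * Real.sqrt (q * (1 - q) * rn) - 0.8 * rn)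
    (hk : k = ⌊(n : ℝ) * (1 - qstar)⌋₊)
    (hk1 : 1 ≤ k) (hkn : k ≤ n)
    (hnull : quantileRisk μ R lam q > α) :
    P {ω | kthSmallest (List.ofFn fun i => R (Z i ω) lam) k < α} ≤ ENNReal.ofReal ε := by
  classical
  -- the set of low-risk data points and its measurable hull
  set A : Set E := {z | R z lam ≤ α} with hA
  set B : Set E := toMeasurable μ A with hBdef
  have hB : MeasurableSet B := measurableSet_toMeasurable μ A
  have hμB : μ B = μ A := measure_toMeasurable A
  set p : ℝ := (μ B).toReal with hpdef
  have hp0 : 0 ≤ p := ENNReal.toReal_nonneg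
  have hpm : p ≤ 1 - q := by
    by_contra hcon
    push_neg at hcon
    have hmem : α ∈ {r : ℝ | 0 ≤ r ∧ (μ {z | R z lam ≤ r}).toReal ≥ 1 - q} := by
      refine ⟨hα.1.le, ?_⟩
      rw [hpdef, hμB] at hcon
      exact le_of_lt hcon
    have hbdd : BddBelow {r : ℝ | 0 ≤ r ∧ (μ {z | R z lam ≤ r}).toReal ≥ 1 - q} :=
      ⟨0, fun r hr => hr.1⟩
    have := csInf_le hbdd hmem
    rw [quantileRisk] at hnull
    linarith
  -- indicator variables
  set f : E → ℝ := fun z => if z ∈ B then 1 else 0 with hfdef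
  have hf : Measurable f := measurable_const.ite hB measurable_const
  set X : Fin n → Ω → ℝ := fun i => f ∘ Z i with hXdef
  have hXmeas : ∀ i, Measurable (X i) := fun i => hf.comp (hmeas i)
  have hXindep : iIndepFun X P :=
    hindep.comp (fun _ => f) (fun _ => hf)
  -- event inclusion
  have hsub : {ω | kthSmallest (List.ofFn fun i => R (Z i ω) lam) k < α}
      ⊆ {ω | (k:ℝ) ≤ (∑ i, X i) ω} := by
    intro ω hω
    simp only [Set.mem_setOf_eq] at hω ⊢
    have hlen : (List.ofFn fun i => R (Z i ω) lam).length = n := List.length_ofFn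
    have hcount := kth_count _ k hk1 (by rw [hlen]; exact hkn) α hω
    rw [countP_ofFn] at hcount
    have hcard : (Finset.univ.filter (fun i => decide (R (Z i ω) lam < α) = true)).card
        ≤ (Finset.univ.filter (fun i => Z i ω ∈ B)).card := by
      apply Finset.card_le_card
      intro i hi
      simp only [Finset.mem_filter, decide_eq_true_eq] at hi ⊢
      refine ⟨Finset.mem_univ _, ?_⟩
      exact subset_toMeasurable μ A (le_of_lt hi.2)
    have hsum : (∑ i, X i) ω = ((Finset.univ.filter (fun i => Z i ω ∈ B)).card : ℝ) := by
      rw [Finset.sum_apply]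
      simp only [hXdef, Function.comp_apply, hfdef]
      rw [Finset.sum_boole]
    rw [hsum]
    exact_mod_cast le_trans hcount hcard
  -- Chernoff bound
  obtain ⟨t, ht0, hcher⟩ := key_ineq n k hn q ε p hq.1 hq.2 hε.1 hε.2 hp0 hpm
    (by
      rw [hqstar, hrn] at hk
      have := Nat.lt_floor_add_one ((n:ℝ) * (1 - (q - 1.5 * Real.sqrt (q * (1 - q) *
        ((1.4 * Real.log (Real.log (2.1 * n)) + Real.log (10 / ε)) / n)) -
        0.8 * ((1.4 * Real.log (Real.log (2.1 * n)) + Real.log (10 / ε)) / n))))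
      rw [← hk] at this
      exact this)
  have hexp1 : (1:ℝ) ≤ Real.exp t := Real.one_le_exp ht0.le
  -- each X i is bounded in [0,1]
  have hX01 : ∀ i ω, X i ω = 0 ∨ X i ω = 1 := by
    intro i ω
    simp only [hXdef, Function.comp_apply, hfdef]
    by_cases h : Z i ω ∈ B <;> simp [h]
  -- integrability of exp (t * X i) and of exp (t * sum)
  have hSapp : (∑ i, X i) = fun ω => ∑ i, X i ω := by
    funext ω; exact Finset.sum_apply _ _ _
  have hSmeas : Measurable (∑ i, X i) := by
    rw [hSapp]
    exact Finset.measurable_sum _ (fun i _ => hXmeas i)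
  have hint : Integrable (fun ω => Real.exp (t * (∑ i, X i) ω)) P := by
    apply Integrable.mono' (integrable_const (Real.exp (t * n)))
    · exact (Real.measurable_exp.comp (measurable_const.mul hSmeas)).aestronglyMeasurable
    · filter_upwards with ω
      rw [Real.norm_eq_abs, abs_of_pos (Real.exp_pos _)]
      apply Real.exp_le_exp.mpr
      apply mul_le_mul_of_nonneg_left _ ht0.le
      rw [Finset.sum_apply]
      calc ∑ i, X i ω ≤ ∑ _i : Fin n, (1:ℝ) := by
            apply Finset.sum_le_sum
            intro i _
            rcases hX01 i ω with h | h <;> rw [h] <;> norm_num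
        _ = n := by simp
  -- mgf computation
  have hmgf : ∀ i, mgf (X i) P t = 1 + (Real.exp t - 1) * p := by
    intro i
    rw [mgf]
    have hsm : AEStronglyMeasurable (fun z => Real.exp (t * f z)) (Measure.map (Z i) P) :=
      ((measurable_const.mul hf).exp).aestronglyMeasurable
    have hchg : ∫ ω, Real.exp (t * X i ω) ∂P = ∫ z, Real.exp (t * f z) ∂μ := by
      rw [← hident i, integral_map (hmeas i).aemeasurable hsm]
      rfl
    rw [hchg]
    have heq : (fun z => Real.exp (t * f z))
        = fun z => B.indicator (fun _ => Real.exp t - 1) z + 1 := by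
      funext z
      by_cases h : z ∈ B <;> simp [hfdef, h, Set.indicator_apply, Real.exp_zero]
    rw [heq]
    rw [integral_add ((integrable_const _).indicator hB) (integrable_const 1)]
    rw [integral_indicator_const _ hB]
    simp [measure_univ, hpdef]
    simp only [Measure.real]
    ring
  -- apply the Chernoff-Markov inequality
  have hmark := measure_ge_le_exp_mul_mgf (μ := P) (X := ∑ i, X i) (k : ℝ) ht0.le hint
  rw [(hXindep.mgf_sum hXmeas Finset.univ)] at hmark
  have hprod : ∏ i, mgf (X i) P t = (1 + (Real.exp t - 1) * p) ^ n := by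
    rw [Finset.prod_congr rfl (fun i _ => hmgf i), Finset.prod_const]
    simp
  rw [hprod] at hmark
  have hfinal : (P {ω | (k:ℝ) ≤ (∑ i, X i) ω}).toReal ≤ ε := by
    apply le_trans hmark
    calc Real.exp (-t * k) * (1 + (Real.exp t - 1) * p) ^ n
        = Real.exp (-(t * k)) * (1 + (Real.exp t - 1) * p) ^ n := by rw [neg_mul]
      _ ≤ ε := hcher
  calc P {ω | kthSmallest (List.ofFn fun i => R (Z i ω) lam) k < α}
      ≤ P {ω | (k:ℝ) ≤ (∑ i, X i) ω} := measure_mono hsub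
    _ = ENNReal.ofReal ((P {ω | (k:ℝ) ≤ (∑ i, X i) ω}).toReal) :=
        (ENNReal.ofReal_toReal (measure_ne_top P _)).symm
    _ ≤ ENNReal.ofReal ε := ENNReal.ofReal_le_ofReal hfinal
end

section
/- Let Λ be a nonempty finite set of hyperparameters with m = |Λ|, let α, δ ∈ (0,1), and let (Ω, F, P) be a probability space modeling the calibration data. For each λ ∈ Λ, let R(λ) ∈ [0,1] be the (deterministic) average risk of λ, and let p_λ : Ω → [0,1] be a measurable random variable that is superuniform whenever R(λ) > α, i.e., if R(λ) > α then P[ p_λ ≤ u ] ≤ u for all u ∈ [0,1]. Define Λ̂(ω) = { λ ∈ Λ : p_λ(ω) < δ/m }. Then P[ R(λ̂) ≤ α for all λ̂ ∈ Λ̂ ] ≥ 1 − δ. -/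
/-!
A selected `λ` with `R(λ) > α` is a null hypothesis whose p-value fell below `δ/m`. By
superuniformity each of the at most `m` null hypotheses does so with probability at most `δ/m`,
so by the union bound some selected `λ` is unreliable with probability at most `δ`.
-/

open MeasureTheory Set

lemma natCast_mul_ofReal_div_le {a : ℝ} (ha : 0 ≤ a) (n : ℕ) :
    (n : ENNReal) * ENNReal.ofReal (a / n) ≤ ENNReal.ofReal a := by
  rw [← ENNReal.ofReal_natCast, ← ENNReal.ofReal_mul n.cast_nonneg]
  refine ENNReal.ofReal_le_ofReal ?_
  rcases eq_or_ne n 0 with rfl | hn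
  · simpa using ha
  · rw [mul_div_cancel₀ _ (Nat.cast_ne_zero.mpr hn)]

lemma one_sub_measure_le_measure_compl {α : Type*} [MeasurableSpace α] (μ : Measure α)
    [IsProbabilityMeasure μ] (s : Set α) : 1 - μ s ≤ μ sᶜ := by
  rw [tsub_le_iff_left, ← measure_univ (μ := μ)]
  exact measure_univ_le_add_compl s

theorem measure_exists_null_rejected_le {Ω ι : Type*} [MeasurableSpace Ω] [Fintype ι]
    (P : Measure Ω) (H : ι → Prop) (p : ι → Ω → ℝ) (u : ℝ)
    (hsuper : ∀ i, H i → P {ω | p i ω ≤ u} ≤ ENNReal.ofReal u) :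
    P {ω | ∃ i, H i ∧ p i ω ≤ u} ≤ Fintype.card ι * ENNReal.ofReal u := by
  have hnull : ∀ i, P {ω | H i ∧ p i ω ≤ u} ≤ ENNReal.ofReal u := by
    intro i
    by_cases hi : H i
    · simpa only [hi, true_and] using hsuper i hi
    · simp only [hi, false_and, ofPred_false, measure_empty, zero_le]
  calc P {ω | ∃ i, H i ∧ p i ω ≤ u}
      = P (⋃ i, {ω | H i ∧ p i ω ≤ u}) := by rw [ofPred_exists]
    _ ≤ ∑ i, P {ω | H i ∧ p i ω ≤ u} := measure_iUnion_fintype_le P _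
    _ ≤ Fintype.card ι * ENNReal.ofReal u := by
      rw [← Finset.card_univ, ← nsmul_eq_mul]
      exact Finset.sum_le_card_nsmul _ _ _ fun i _ => hnull i

theorem ltt_bonferroni_guarantee_general
    {Ω : Type*} [MeasurableSpace Ω] (P : Measure Ω) [IsProbabilityMeasure P]
    {Λ : Type*} [Fintype Λ]
    (m : ℕ) (hm : m = Fintype.card Λ)
    (α δ : ℝ) (hδ : δ ∈ Set.Ioo (0 : ℝ) 1)
    (Risk : Λ → ℝ)
    (p : Λ → Ω → ℝ)
    (hsuper : ∀ lam, Risk lam > α → ∀ u ∈ Set.Icc (0 : ℝ) 1,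
      P {ω | p lam ω ≤ u} ≤ ENNReal.ofReal u)
    (Λhat : Ω → Set Λ)
    (hΛhat : Λhat = fun ω => {lam | p lam ω < δ / m}) :
    P {ω | ∀ lam ∈ Λhat ω, Risk lam ≤ α} ≥ ENNReal.ofReal (1 - δ) := by
  obtain ⟨hδ0, hδ1⟩ := hδ
  have hlevel : δ / m ∈ Icc (0 : ℝ) 1 :=
    ⟨by positivity, (div_nat_le_self_of_nonnneg hδ0.le m).trans hδ1.le⟩
  set bad := {ω | ∃ lam, α < Risk lam ∧ p lam ω ≤ δ / m}
  have hbad : P bad ≤ ENNReal.ofReal δ := by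
    refine (measure_exists_null_rejected_le P _ p _ fun lam h => hsuper lam h _ hlevel).trans ?_
    rw [← hm]
    exact natCast_mul_ofReal_div_le hδ0.le m
  have hgood : badᶜ ⊆ {ω | ∀ lam ∈ Λhat ω, Risk lam ≤ α} := by
    subst hΛhat
    intro ω hω lam hlam
    by_contra! hrisk
    exact hω ⟨lam, hrisk, hlam.le⟩
  calc ENNReal.ofReal (1 - δ) = 1 - ENNReal.ofReal δ := by
        rw [ENNReal.ofReal_sub _ hδ0.le, ENNReal.ofReal_one]
    _ ≤ 1 - P bad := tsub_le_tsub_left hbad 1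
    _ ≤ P badᶜ := one_sub_measure_le_measure_compl P bad
    _ ≤ _ := measure_mono hgood

/-- **LTT reliability guarantee with the Bonferroni correction (abstract version).**
If for every `λ` with average risk `R(λ) > α` the p-value `p_λ` is superuniform, then
the Bonferroni selection `Λ̂ = {λ : p_λ < δ/m}` contains only reliable hyperparameters
(`R(λ̂) ≤ α` for all `λ̂ ∈ Λ̂`) with probability at least `1 - δ`. -/
theorem ltt_bonferroni_guarantee
    {Ω : Type*} [MeasurableSpace Ω] (P : Measure Ω) [IsProbabilityMeasure P]
    {Λ : Type*} [Fintype Λ] [Nonempty Λ]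
    (m : ℕ) (hm : m = Fintype.card Λ)
    (α δ : ℝ) (hα : α ∈ Set.Ioo (0 : ℝ) 1) (hδ : δ ∈ Set.Ioo (0 : ℝ) 1)
    (Risk : Λ → ℝ) (hRisk : ∀ lam, Risk lam ∈ Set.Icc (0 : ℝ) 1)
    (p : Λ → Ω → ℝ)
    (hmeas : ∀ lam, Measurable (p lam))
    (hrange : ∀ lam ω, p lam ω ∈ Set.Icc (0 : ℝ) 1)
    (hsuper : ∀ lam, Risk lam > α → ∀ u ∈ Set.Icc (0 : ℝ) 1,
      P {ω | p lam ω ≤ u} ≤ ENNReal.ofReal u)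
    (Λhat : Ω → Set Λ)
    (hΛhat : Λhat = fun ω => {lam | p lam ω < δ / m}) :
    P {ω | ∀ lam ∈ Λhat ω, Risk lam ≤ α} ≥ ENNReal.ofReal (1 - δ) :=
  ltt_bonferroni_guarantee_general P m hm α δ hδ Risk p hsuper Λhat hΛhat
end

section
/- Let Λ be a nonempty finite set of hyperparameters with m = |Λ|, fix α, δ ∈ (0,1), and let Z_1, ..., Z_n be i.i.d. random variables with common distribution p_Z. For each λ ∈ Λ let R(Z, λ) ∈ [0,1] be the risk on data point Z, let R(λ) = E_{Z∼p_Z}[R(Z,λ)] be the average risk, let R̂(λ) = (1/n)·Σ_{i=1}^n R(Z_i, λ) be the empirical risk, and define the Hoeffding p-value p_λ = exp( −2n·((α − R̂(λ))_+)^2 ). Define Λ̂ = { λ ∈ Λ : p_λ < δ/m }. Then P[ R(λ̂) ≤ α for all λ̂ ∈ Λ̂ ] ≥ 1 − δ. -/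
open Real MeasureTheory ProbabilityTheory

lemma gpos {p : ℝ} (hp0 : 0 ≤ p) (hp1 : p ≤ 1) (s : ℝ) : 0 < 1 - p + p * Real.exp s := by
  rcases eq_or_lt_of_le hp1 with h | h
  · rw [h]; simpa using exp_pos s
  · have h2 : 0 ≤ p * Real.exp s := mul_nonneg hp0 (exp_pos s).le
    linarith

lemma hoeffding_analytic (p : ℝ) (hp0 : 0 ≤ p) (hp1 : p ≤ 1) (s : ℝ) :
    Real.log (1 - p + p * Real.exp s) - p * s ≤ s ^ 2 / 8 := by
  have hgall : ∀ x, 0 < 1 - p + p * Real.exp x := gpos hp0 hp1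
  set g : ℝ → ℝ := fun x => 1 - p + p * Real.exp x with hg_def
  have hg : ∀ x, 0 < g x := hgall
  set q : ℝ → ℝ := fun x => p * Real.exp x / g x with hq_def
  have hq0 : ∀ x, 0 ≤ q x := fun x => div_nonneg (mul_nonneg hp0 (exp_pos x).le) (hg x).le
  have hq1 : ∀ x, q x ≤ 1 := by
    intro x
    rw [hq_def, div_le_one (hg x)]
    simp only [hg_def]; linarith
  have hgd : ∀ x, HasDerivAt g (p * Real.exp x) x := by
    intro x
    exact ((Real.hasDerivAt_exp x).const_mul p).const_add (1 - p)
  have hqd : ∀ x, HasDerivAt q (q x * (1 - q x)) x := by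
    intro x
    have h : HasDerivAt q ((p * Real.exp x * g x - p * Real.exp x * (p * Real.exp x)) / g x ^ 2) x :=
      ((Real.hasDerivAt_exp x).const_mul p).div (hgd x) (hg x).ne'
    convert h using 1
    have := (hg x).ne'
    show p * Real.exp x / g x * (1 - p * Real.exp x / g x) = _
    field_simp
  -- D = derivative of (x^2/8 - (log (g x) - p * x))
  set D : ℝ → ℝ := fun x => x / 4 - (q x - p) with hD_def
  have hDd : ∀ x, HasDerivAt D (1/4 - q x * (1 - q x)) x := by
    intro x
    have h1 : HasDerivAt (fun x : ℝ => x / 4) (1/4) x := by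
      simpa using (hasDerivAt_id x).div_const 4
    have h2 : HasDerivAt (fun x => q x - p) (q x * (1 - q x)) x := (hqd x).sub_const p
    exact h1.sub h2
  have hD'nonneg : ∀ x, 0 ≤ 1/4 - q x * (1 - q x) := by
    intro x
    nlinarith [sq_nonneg (q x - 1/2)]
  have hDmono : Monotone D := by
    apply monotone_of_deriv_nonneg
    · exact fun x => (hDd x).differentiableAt
    · intro x; rw [(hDd x).deriv]; exact hD'nonneg x
  have hD0 : D 0 = 0 := by
    simp [hD_def, hq_def, hg_def]
  set h : ℝ → ℝ := fun x => x ^ 2 / 8 - (Real.log (g x) - p * x) with hh_def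
  have hhd : ∀ x, HasDerivAt h (D x) x := by
    intro x
    have h1 : HasDerivAt (fun x : ℝ => x ^ 2 / 8) (x / 4) x := by
      have : HasDerivAt (fun x : ℝ => x ^ 2 / 8) (((2:ℕ):ℝ) * x ^ (2 - 1) / 8) x :=
        (hasDerivAt_pow 2 x).div_const 8
      convert this using 1; norm_num; ring
    have h2 : HasDerivAt (fun x => Real.log (g x) - p * x) (q x - p) x := by
      have hl : HasDerivAt (fun x => Real.log (g x)) (q x) x := (hgd x).log (hg x).ne'
      have h3 : HasDerivAt (fun x => Real.log (g x) - p * x) (q x - p * 1) x :=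
        hl.sub ((hasDerivAt_id x).const_mul p)
      convert h3 using 1; ring
    exact h1.sub h2
  have hh0 : h 0 = 0 := by simp [hh_def, hg_def]
  have key : 0 ≤ h s := by
    rcases le_or_gt 0 s with hs | hs
    · have hmono : MonotoneOn h (Set.Ici 0) := by
        apply monotoneOn_of_deriv_nonneg (convex_Ici 0)
        · exact fun x _ => ((hhd x).differentiableAt.continuousAt).continuousWithinAt
        · intro x _; exact (hhd x).differentiableAt.differentiableWithinAt
        · intro x hx
          rw [(hhd x).deriv]
          have : (0:ℝ) ≤ D x := by
            have := hDmono (le_of_lt (by simpa [interior_Ici] using hx))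
            rw [hD0] at this; exact this
          exact this
      have := hmono (Set.self_mem_Ici) (Set.mem_Ici.mpr hs) hs
      rw [hh0] at this; exact this
    · have hanti : AntitoneOn h (Set.Iic 0) := by
        apply antitoneOn_of_deriv_nonpos (convex_Iic 0)
        · exact fun x _ => ((hhd x).differentiableAt.continuousAt).continuousWithinAt
        · intro x _; exact (hhd x).differentiableAt.differentiableWithinAt
        · intro x hx
          rw [(hhd x).deriv]
          have := hDmono (le_of_lt (by simpa [interior_Iic] using hx))
          rw [hD0] at this; linarith
      have := hanti (Set.mem_Iic.mpr hs.le) (Set.self_mem_Iic) hs.le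
      rw [hh0] at this; exact this
  simpa [hh_def] using key

/-- Hoeffding's lemma for [0,1]-valued random variables. -/
lemma hoeffding_mgf {Ω' : Type*} [MeasurableSpace Ω'] (ν : Measure Ω') [IsProbabilityMeasure ν]
    (X : Ω' → ℝ) (hX : Measurable X) (hb : ∀ ω, X ω ∈ Set.Icc (0:ℝ) 1) (s : ℝ) :
    ∫ ω, Real.exp (s * (X ω - ∫ ω', X ω' ∂ν)) ∂ν ≤ Real.exp (s ^ 2 / 8) := by
  set c : ℝ := ∫ ω', X ω' ∂ν with hc_def
  have hXint : Integrable X ν := by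
    refine Integrable.mono' (integrable_const 1) hX.aestronglyMeasurable (ae_of_all _ fun ω => ?_)
    rw [Real.norm_eq_abs, abs_le]
    exact ⟨by linarith [(hb ω).1], (hb ω).2⟩
  have hc0 : 0 ≤ c := integral_nonneg fun ω => (hb ω).1
  have hc1 : c ≤ 1 := by
    calc c ≤ ∫ _ω, (1:ℝ) ∂ν := integral_mono hXint (integrable_const 1) fun ω => (hb ω).2
      _ = 1 := by simp
  have hpt : ∀ ω, Real.exp (s * X ω) ≤ (1 - X ω) + X ω * Real.exp s := by
    intro ω
    have h := convexOn_exp.2 (Set.mem_univ (0:ℝ)) (Set.mem_univ s)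
      (by linarith [(hb ω).2] : (0:ℝ) ≤ 1 - X ω) ((hb ω).1) (by ring)
    simp only [smul_eq_mul, mul_zero, zero_add, Real.exp_zero, mul_one] at h
    rw [mul_comm]
    exact h
  have hexpint : Integrable (fun ω => Real.exp (s * X ω)) ν := by
    refine Integrable.mono' (integrable_const (Real.exp |s|))
      ((hX.const_mul s).exp.aestronglyMeasurable) (ae_of_all _ fun ω => ?_)
    rw [Real.norm_eq_abs, abs_of_pos (exp_pos _), Real.exp_le_exp]
    calc s * X ω ≤ |s * X ω| := le_abs_self _
      _ = |s| * |X ω| := abs_mul _ _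
      _ ≤ |s| * 1 := by
          gcongr
          rw [abs_le]; exact ⟨by linarith [(hb ω).1], (hb ω).2⟩
      _ = |s| := mul_one _
  have h1int : Integrable (fun ω => 1 - X ω) ν := by
    exact (integrable_const (1:ℝ)).sub hXint
  have hrhsint : Integrable (fun ω => (1 - X ω) + X ω * Real.exp s) ν :=
    h1int.add (hXint.mul_const _)
  have hsum : ∫ ω, Real.exp (s * X ω) ∂ν ≤ 1 - c + c * Real.exp s := by
    calc ∫ ω, Real.exp (s * X ω) ∂ν ≤ ∫ ω, ((1 - X ω) + X ω * Real.exp s) ∂ν :=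
          integral_mono hexpint hrhsint hpt
      _ = 1 - c + c * Real.exp s := by
          rw [integral_add h1int (hXint.mul_const _),
            integral_sub (integrable_const 1) hXint, integral_mul_const, integral_const]
          simp [hc_def]
  have heq : (fun ω => Real.exp (s * (X ω - c))) = fun ω => Real.exp (s * X ω) / Real.exp (s * c) := by
    funext ω; rw [mul_sub, Real.exp_sub]
  rw [heq, integral_div, div_le_iff₀ (exp_pos _), ← Real.exp_add]
  refine hsum.trans ?_
  have hlog := hoeffding_analytic c hc0 hc1 s
  have hg := gpos hc0 hc1 s
  calc 1 - c + c * Real.exp s = Real.exp (Real.log (1 - c + c * Real.exp s)) := (Real.exp_log hg).symm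
    _ ≤ Real.exp (s ^ 2 / 8 + s * c) := by
        rw [Real.exp_le_exp]
        have : c * s = s * c := mul_comm _ _
        linarith


lemma chernoff_sum {Ω : Type*} [MeasurableSpace Ω] (P : Measure Ω) [IsProbabilityMeasure P]
    (n : ℕ) (hn : 0 < n) (Y : Fin n → Ω → ℝ) (hmeas : ∀ i, Measurable (Y i))
    (hindep : iIndepFun Y P)
    (hbdd : ∀ i ω, |Y i ω| ≤ 1)
    (hmgf : ∀ i s, mgf (Y i) P s ≤ Real.exp (s ^ 2 / 8))
    (ε : ℝ) (hε : 0 ≤ ε) :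
    P {ω | ∑ i, Y i ω ≤ -ε} ≤ ENNReal.ofReal (Real.exp (-2 * ε ^ 2 / n)) := by
  set t : ℝ := -4 * ε / n with ht_def
  have ht : t ≤ 0 := by
    apply div_nonpos_of_nonpos_of_nonneg <;> [linarith; positivity]
  have hint : ∀ i, Integrable (fun ω => Real.exp (t * Y i ω)) P := by
    intro i
    refine Integrable.mono' (integrable_const (Real.exp |t|))
      (((hmeas i).const_mul t).exp.aestronglyMeasurable) (ae_of_all _ fun ω => ?_)
    rw [Real.norm_eq_abs, abs_of_pos (exp_pos _), Real.exp_le_exp]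
    calc t * Y i ω ≤ |t * Y i ω| := le_abs_self _
      _ = |t| * |Y i ω| := abs_mul _ _
      _ ≤ |t| * 1 := by gcongr; exact hbdd i ω
      _ = |t| := mul_one _
  have hintsum : Integrable (fun ω => Real.exp (t * (∑ i, Y i) ω)) P :=
    hindep.integrable_exp_mul_sum hmeas (fun i _ => hint i)
  have hcher := measure_le_le_exp_mul_mgf (X := ∑ i, Y i) (μ := P) (-ε) ht hintsum
  have hmgfsum : mgf (∑ i, Y i) P t ≤ Real.exp (n * (t ^ 2 / 8)) := by
    rw [hindep.mgf_sum hmeas]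
    calc ∏ i, mgf (Y i) P t ≤ ∏ _i : Fin n, Real.exp (t ^ 2 / 8) :=
          Finset.prod_le_prod (fun i _ => mgf_nonneg) (fun i _ => hmgf i t)
      _ = Real.exp (n * (t ^ 2 / 8)) := by
          rw [Finset.prod_const, ← Real.exp_nat_mul]; simp
  have hnR : (0:ℝ) < n := Nat.cast_pos.mpr hn
  have hexp : Real.exp (-t * -ε) * mgf (∑ i, Y i) P t ≤ Real.exp (-2 * ε ^ 2 / n) := by
    calc Real.exp (-t * -ε) * mgf (∑ i, Y i) P t
        ≤ Real.exp (-t * -ε) * Real.exp (n * (t ^ 2 / 8)) := by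
          gcongr
      _ = Real.exp (-t * -ε + n * (t ^ 2 / 8)) := (Real.exp_add _ _).symm
      _ = Real.exp (-2 * ε ^ 2 / n) := by
          congr 1
          rw [ht_def]
          field_simp
          ring
  have hfin : P {ω | (∑ i, Y i) ω ≤ -ε} ≤ ENNReal.ofReal (Real.exp (-2 * ε ^ 2 / n)) := by
    rw [← ENNReal.ofReal_toReal (measure_ne_top P _)]
    exact ENNReal.ofReal_le_ofReal (hcher.trans hexp)
  convert hfin using 3
  simp

open MeasureTheory ProbabilityTheory Set

/-- **Concrete LTT guarantee with Hoeffding p-values and the Bonferroni correction.**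
With i.i.d. calibration data `Z_1, ..., Z_n`, empirical risks
`R̂(λ) = (1/n)∑ R(Z_i, λ)`, Hoeffding p-values `p_λ = exp(-2n((α - R̂(λ))_+)^2)`, and
Bonferroni selection `Λ̂ = {λ : p_λ < δ/m}`, all selected hyperparameters satisfy
`R(λ̂) ≤ α` with probability at least `1 - δ`. -/
theorem ltt_hoeffding_bonferroni
    {Ω E Λ : Type*} [MeasurableSpace Ω] [MeasurableSpace E]
    [Fintype Λ] [Nonempty Λ]
    (P : Measure Ω) [IsProbabilityMeasure P]
    (m : ℕ) (hm : m = Fintype.card Λ)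
    (α δ : ℝ) (hα : α ∈ Set.Ioo (0 : ℝ) 1) (hδ : δ ∈ Set.Ioo (0 : ℝ) 1)
    (n : ℕ) (hn : 0 < n) (Z : Fin n → Ω → E)
    (hmeas : ∀ i, Measurable (Z i))
    (hindep : iIndepFun Z P)
    (μ : Measure E) [IsProbabilityMeasure μ]
    (hident : ∀ i, Measure.map (Z i) P = μ)
    (R : E → Λ → ℝ) (hRmeas : ∀ lam, Measurable fun z => R z lam)
    (hR : ∀ z lam, R z lam ∈ Set.Icc (0 : ℝ) 1)
    (Ravg : Λ → ℝ) (hRavg : Ravg = fun lam => ∫ z, R z lam ∂μ)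
    (Rhat : Λ → Ω → ℝ)
    (hRhat : Rhat = fun lam ω => (1 / (n : ℝ)) * ∑ i, R (Z i ω) lam)
    (p : Λ → Ω → ℝ)
    (hp : p = fun lam ω => Real.exp (-2 * n * (max (α - Rhat lam ω) 0) ^ 2))
    (Λhat : Ω → Set Λ)
    (hΛhat : Λhat = fun ω => {lam | p lam ω < δ / m}) :
    P {ω | ∀ lam ∈ Λhat ω, Ravg lam ≤ α} ≥ ENNReal.ofReal (1 - δ) := by
  have hm1 : 1 ≤ m := by rw [hm]; exact Fintype.card_pos
  have hmR : (0:ℝ) < m := by exact_mod_cast hm1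
  have hδm : 0 < δ / m := div_pos hδ.1 hmR
  have hnR : (0:ℝ) < n := Nat.cast_pos.mpr hn
  have hlogpos : 0 < Real.log ((m:ℝ) / δ) :=
    Real.log_pos ((one_lt_div hδ.1).mpr (lt_of_lt_of_le hδ.2 (by exact_mod_cast hm1)))
  set t₀ : ℝ := Real.sqrt (Real.log ((m:ℝ) / δ) / (2 * n)) with ht₀_def
  have ht₀pos : 0 < t₀ := Real.sqrt_pos.mpr (div_pos hlogpos (by positivity))
  have ht₀sq : t₀ ^ 2 = Real.log ((m:ℝ) / δ) / (2 * n) :=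
    Real.sq_sqrt (le_of_lt (div_pos hlogpos (by positivity)))
  have hRhatmeas : ∀ lam, Measurable (Rhat lam) := by
    intro lam; rw [hRhat]
    exact (Finset.univ.measurable_sum fun i _ => (hRmeas lam).comp (hmeas i)).const_mul _
  have hp_meas : ∀ lam, Measurable (p lam) := by
    intro lam; rw [hp]
    exact ((((measurable_const.sub (hRhatmeas lam)).max measurable_const).pow_const 2).const_mul
      (-2 * n)).exp
  set C : Λ → Set Ω := fun lam => {ω | α < Ravg lam ∧ p lam ω < δ / m} with hC_def
  have hCmeas : ∀ lam, MeasurableSet (C lam) := by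
    intro lam
    by_cases h : α < Ravg lam
    · have : C lam = {ω | p lam ω < δ / m} := by ext ω; simp [hC_def, h]
      rw [this]; exact measurableSet_lt (hp_meas lam) measurable_const
    · have : C lam = ∅ := by ext ω; simp [hC_def, h]
      rw [this]; exact MeasurableSet.empty
  have hCbound : ∀ lam, P (C lam) ≤ ENNReal.ofReal (δ / m) := by
    intro lam
    by_cases hlam : α < Ravg lam
    · -- the Hoeffding argument
      set Y : Fin n → Ω → ℝ := fun i ω => R (Z i ω) lam - Ravg lam with hY_def
      have hYmeas : ∀ i, Measurable (Y i) := fun i =>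
        ((hRmeas lam).comp (hmeas i)).sub_const _
      have hYindep : iIndepFun Y P :=
        hindep.comp (fun _ z => R z lam - Ravg lam) (fun _ => (hRmeas lam).sub_const _)
      have hRavg01 : Ravg lam ∈ Set.Icc (0:ℝ) 1 := by
        have hRint : Integrable (fun z => R z lam) μ := by
          refine Integrable.mono' (integrable_const 1) (hRmeas lam).aestronglyMeasurable
            (ae_of_all _ fun z => ?_)
          rw [Real.norm_eq_abs, abs_le]
          exact ⟨by linarith [(hR z lam).1], (hR z lam).2⟩
        rw [hRavg]
        constructor
        · exact integral_nonneg fun z => (hR z lam).1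
        · calc ∫ z, R z lam ∂μ ≤ ∫ _z, (1:ℝ) ∂μ :=
              integral_mono hRint (integrable_const 1) fun z => (hR z lam).2
            _ = 1 := by simp
      have hYbdd : ∀ i ω, |Y i ω| ≤ 1 := by
        intro i ω
        rw [abs_le]
        constructor
        · have := (hR (Z i ω) lam).1; have := hRavg01.2; simp only [hY_def]; linarith
        · have := (hR (Z i ω) lam).2; have := hRavg01.1; simp only [hY_def]; linarith
      have hYmgf : ∀ i s, mgf (Y i) P s ≤ Real.exp (s ^ 2 / 8) := by
        intro i s
        have hRavglam : Ravg lam = ∫ z, R z lam ∂μ := by rw [hRavg]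
        have hmap : mgf (Y i) P s = ∫ z, Real.exp (s * (R z lam - Ravg lam)) ∂μ := by
          rw [mgf, ← hident i, integral_map (hmeas i).aemeasurable
            ((((hRmeas lam).sub_const _).const_mul s).exp.aestronglyMeasurable)]
        rw [hmap, hRavglam]
        exact hoeffding_mgf μ (fun z => R z lam) (hRmeas lam) (fun z => hR z lam) s
      have hsub : C lam ⊆ {ω | ∑ i, Y i ω ≤ -((n:ℝ) * t₀)} := by
        intro ω hω
        obtain ⟨hlam', hpω⟩ := hω
        rw [hp] at hpω
        simp only at hpω
        set u : ℝ := max (α - Rhat lam ω) 0 with hu_def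
        have hu0 : 0 ≤ u := le_max_right _ _
        have hlt : -2 * (n:ℝ) * u ^ 2 < Real.log (δ / m) :=
          (Real.lt_log_iff_exp_lt hδm).mpr hpω
        have hlogneg : Real.log (δ / (m:ℝ)) = -Real.log ((m:ℝ) / δ) := by
          rw [show δ / (m:ℝ) = ((m:ℝ) / δ)⁻¹ by rw [inv_div], Real.log_inv]
        rw [hlogneg] at hlt
        have husq : t₀ ^ 2 < u ^ 2 := by
          rw [ht₀sq]
          rw [div_lt_iff₀ (by positivity)]
          nlinarith
        have htu : t₀ ≤ u := by nlinarith
        have hle : t₀ ≤ α - Rhat lam ω := by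
          rcases le_or_gt (α - Rhat lam ω) 0 with h | h
          · exfalso; rw [hu_def, max_eq_right h] at htu; linarith
          · rwa [hu_def, max_eq_left h.le] at htu
        have hsumRhat : ∑ i, R (Z i ω) lam = (n:ℝ) * Rhat lam ω := by
          rw [hRhat]; field_simp
        have : ∑ i, Y i ω = (n:ℝ) * Rhat lam ω - (n:ℝ) * Ravg lam := by
          simp only [hY_def]
          rw [Finset.sum_sub_distrib, hsumRhat, Finset.sum_const, Finset.card_univ,
            Fintype.card_fin, nsmul_eq_mul]
        rw [Set.mem_setOf_eq, this]
        nlinarith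
      calc P (C lam) ≤ P {ω | ∑ i, Y i ω ≤ -((n:ℝ) * t₀)} := measure_mono hsub
        _ ≤ ENNReal.ofReal (Real.exp (-2 * ((n:ℝ) * t₀) ^ 2 / n)) :=
            chernoff_sum P n hn Y hYmeas hYindep hYbdd hYmgf _ (by positivity)
        _ = ENNReal.ofReal (δ / m) := by
            congr 1
            have h1 : -2 * ((n:ℝ) * t₀) ^ 2 / n = Real.log (δ / (m:ℝ)) := by
              rw [show δ / (m:ℝ) = ((m:ℝ) / δ)⁻¹ by rw [inv_div], Real.log_inv]
              rw [mul_pow, ht₀sq]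
              field_simp
            rw [h1, Real.exp_log hδm]
    · have : C lam = ∅ := by ext ω; simp [hC_def, hlam]
      rw [this]
      simp
  have hGeq : {ω | ∀ lam ∈ Λhat ω, Ravg lam ≤ α} = (⋃ lam, C lam)ᶜ := by
    ext ω
    simp only [hΛhat, hC_def, Set.mem_setOf_eq, Set.mem_compl_iff, Set.mem_iUnion,
      not_exists, not_and, not_lt]
    constructor
    · intro h lam h1
      by_contra h2
      push_neg at h2
      exact absurd (h lam h2) (not_le.mpr h1)
    · intro h lam h1
      by_contra h2
      push_neg at h2
      exact absurd (h lam h2) (not_le.mpr h1)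
  have hU : MeasurableSet (⋃ lam, C lam) := MeasurableSet.iUnion fun lam => hCmeas lam
  have hPU : P (⋃ lam, C lam) ≤ ENNReal.ofReal δ := by
    calc P (⋃ lam, C lam) ≤ ∑' lam, P (C lam) := measure_iUnion_le _
      _ = ∑ lam, P (C lam) := tsum_fintype _
      _ ≤ Finset.univ.sum (fun _ : Λ => ENNReal.ofReal (δ / m)) :=
          Finset.sum_le_sum fun lam _ => hCbound lam
      _ = (Fintype.card Λ : ENNReal) * ENNReal.ofReal (δ / m) := by
          rw [Finset.sum_const, Finset.card_univ, nsmul_eq_mul]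
      _ = ENNReal.ofReal δ := by
          rw [← hm, ← ENNReal.ofReal_natCast m, ← ENNReal.ofReal_mul (by positivity)]
          congr 1
          field_simp
  rw [hGeq, ge_iff_le, prob_compl_eq_one_sub hU]
  calc ENNReal.ofReal (1 - δ) = 1 - ENNReal.ofReal δ := by
        rw [ENNReal.ofReal_sub 1 hδ.1.le, ENNReal.ofReal_one]
    _ ≤ 1 - P (⋃ lam, C lam) := tsub_le_tsub_left hPU 1
end

section
/- Let λ_1, ..., λ_m be a fixed ordering of a finite hyperparameter set Λ, fix α, δ ∈ (0,1), and let Z_1, ..., Z_n be i.i.d. random variables with common distribution p_Z. For each λ let R(Z, λ) ∈ [0,1] be the risk on data point Z, let R(λ) = E_{Z∼p_Z}[R(Z,λ)], let R̂(λ) = (1/n)·Σ_{i=1}^n R(Z_i, λ), and define the Hoeffding p-value p_λ = exp( −2n·((α − R̂(λ))_+)^2 ). Let Λ̂ = { λ_1, ..., λ_I }, where I is the largest index i ∈ {0, 1, ..., m} such that p_{λ_j} ≤ δ for all j ≤ i (with Λ̂ = ∅ when I = 0). Then P[ R(λ̂) ≤ α for all λ̂ ∈ Λ̂ ] ≥ 1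 − δ. -/
open MeasureTheory ProbabilityTheory Set

open Real Set

lemma convex_step (t y : ℝ) (hy : y ∈ Icc (0:ℝ) 1) : exp (t * y) ≤ 1 - y + y * exp t := by
  have h := convexOn_exp.2 (Set.mem_univ (0:ℝ)) (Set.mem_univ t)
    (show (0:ℝ) ≤ 1 - y by linarith [hy.2]) hy.1 (show (1:ℝ) - y + y = 1 by ring)
  simp only [smul_eq_mul, mul_zero, zero_add, Real.exp_zero, mul_one] at h
  calc exp (t * y) = exp (y * t) := by ring_nf
    _ ≤ (1 - y) * 1 + y * exp t := by
        simp only [smul_eq_mul, mul_zero, zero_add, Real.exp_zero, mul_one] at h ⊢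
        linarith [h]
    _ = 1 - y + y * exp t := by ring

lemma key_ineq_s8 (p t : ℝ) (hp : p ∈ Icc (0:ℝ) 1) :
    1 - p + p * exp t ≤ exp (t * p + t ^ 2 / 8) := by
  set g : ℝ → ℝ := fun x => 1 - p + p * exp x with hgdef
  have hgpos : ∀ x, 0 < g x := by
    intro x
    show 0 < 1 - p + p * exp x
    rcases le_or_gt (exp x) 1 with h | h
    · nlinarith [exp_pos x, hp.1, hp.2, mul_nonneg (sub_nonneg.2 hp.2) (sub_nonneg.2 h)]
    · nlinarith [hp.1, hp.2]
  have hg : ∀ x, HasDerivAt g (p * exp x) x := fun x =>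
    ((Real.hasDerivAt_exp x).const_mul p).const_add (1 - p)
  set φ : ℝ → ℝ := fun x => p + x / 4 - p * exp x / g x with hφdef
  set f : ℝ → ℝ := fun x => x * p + x ^ 2 / 8 - Real.log (g x) with hfdef
  have hf : ∀ x, HasDerivAt f (φ x) x := by
    intro x
    have h1 : HasDerivAt (fun x : ℝ => x * p + x ^ 2 / 8) (1 * p + 2 * x ^ 1 / 8) x :=
      ((hasDerivAt_id x).mul_const p).add ((hasDerivAt_pow 2 x).div_const 8)
    have h2 := h1.sub ((hg x).log (hgpos x).ne')
    refine h2.congr_deriv ?_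
    simp [hφdef]
    ring
  have hφ : ∀ x, HasDerivAt φ
      (1 / 4 - (p * exp x * g x - p * exp x * (p * exp x)) / g x ^ 2) x := by
    intro x
    have h1 : HasDerivAt (fun x : ℝ => p + x / 4) (0 + 1 / 4) x :=
      (hasDerivAt_const x p).add ((hasDerivAt_id x).div_const 4)
    have h2 : HasDerivAt (fun x => p * exp x / g x)
        ((p * exp x * g x - p * exp x * (p * exp x)) / g x ^ 2) x :=
      ((Real.hasDerivAt_exp x).const_mul p).div (hg x) (hgpos x).ne'
    have := h1.sub h2
    refine this.congr_deriv ?_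
    ring
  have hψ : ∀ x, 0 ≤ 1 / 4 - (p * exp x * g x - p * exp x * (p * exp x)) / g x ^ 2 := by
    intro x
    have hgx : g x = 1 - p + p * exp x := rfl
    rw [sub_nonneg, div_le_iff₀ (pow_pos (hgpos x) 2), hgx]
    nlinarith [sq_nonneg ((1 - p) - p * exp x), exp_pos x, hp.1, hp.2]
  have hφmono : Monotone φ := by
    apply monotone_of_deriv_nonneg (fun x => (hφ x).differentiableAt)
    intro x
    rw [(hφ x).deriv]
    exact hψ x
  have hφ0 : φ 0 = 0 := by
    simp [hφdef, hgdef]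
  have hf0 : f 0 = 0 := by
    simp [hfdef, hgdef]
  have hfnonneg : ∀ x, 0 ≤ f x := by
    intro x
    rcases le_total 0 x with hx | hx
    · have hmono : MonotoneOn f (Ici 0) := by
        apply monotoneOn_of_deriv_nonneg (convex_Ici 0)
          (fun x _ => (hf x).differentiableAt.continuousAt.continuousWithinAt)
          (fun x _ => (hf x).differentiableAt.differentiableWithinAt)
        intro y hy
        rw [(hf y).deriv]
        rw [interior_Ici] at hy
        have : φ 0 ≤ φ y := hφmono (le_of_lt hy)
        linarith [hφ0 ▸ this]
      have := hmono (self_mem_Ici) hx hx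
      linarith [hf0 ▸ this]
    · have hanti : AntitoneOn f (Iic 0) := by
        apply antitoneOn_of_deriv_nonpos (convex_Iic 0)
          (fun x _ => (hf x).differentiableAt.continuousAt.continuousWithinAt)
          (fun x _ => (hf x).differentiableAt.differentiableWithinAt)
        intro y hy
        rw [(hf y).deriv]
        rw [interior_Iic] at hy
        have : φ y ≤ φ 0 := hφmono (le_of_lt hy)
        linarith [hφ0 ▸ this]
      have := hanti hx (self_mem_Iic) hx
      linarith [hf0 ▸ this]
  have h := hfnonneg t
  have hlog : Real.log (g t) ≤ t * p + t ^ 2 / 8 := by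
    simp only [hfdef] at h; linarith
  calc 1 - p + p * exp t = g t := rfl
    _ = exp (Real.log (g t)) := (Real.exp_log (hgpos t)).symm
    _ ≤ exp (t * p + t ^ 2 / 8) := Real.exp_le_exp.2 hlog

open MeasureTheory ProbabilityTheory

section Aux

lemma integrable_Icc01 {Ω : Type*} [MeasurableSpace Ω] (P : Measure Ω) [IsProbabilityMeasure P]
    (Y : Ω → ℝ) (hm : Measurable Y) (hb : ∀ ω, Y ω ∈ Icc (0:ℝ) 1) : Integrable Y P := by
  refine Integrable.mono' (integrable_const (1:ℝ)) hm.aestronglyMeasurable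
    (ae_of_all _ fun ω => ?_)
  rw [Real.norm_eq_abs, abs_le]
  exact ⟨by linarith [(hb ω).1], (hb ω).2⟩

lemma integrable_exp_mul_Icc01 {Ω : Type*} [MeasurableSpace Ω] (P : Measure Ω)
    [IsProbabilityMeasure P] (Y : Ω → ℝ) (hm : Measurable Y) (hb : ∀ ω, Y ω ∈ Icc (0:ℝ) 1)
    (t : ℝ) : Integrable (fun ω => exp (t * Y ω)) P := by
  refine Integrable.mono' (integrable_const (exp |t|)) ((hm.const_mul t).exp.aestronglyMeasurable)
    (ae_of_all _ fun ω => ?_)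
  rw [Real.norm_eq_abs, abs_of_pos (exp_pos _), Real.exp_le_exp]
  calc t * Y ω ≤ |t * Y ω| := le_abs_self _
    _ = |t| * |Y ω| := abs_mul _ _
    _ ≤ |t| * 1 := by
        refine mul_le_mul_of_nonneg_left ?_ (abs_nonneg t)
        rw [abs_le]; exact ⟨by linarith [(hb ω).1], (hb ω).2⟩
    _ = |t| := mul_one _

lemma hoeffding_mgf_s8 {Ω : Type*} [MeasurableSpace Ω] (P : Measure Ω) [IsProbabilityMeasure P]
    (Y : Ω → ℝ) (hm : Measurable Y) (hb : ∀ ω, Y ω ∈ Icc (0:ℝ) 1) (t : ℝ) :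
    mgf Y P t ≤ exp (t * (∫ ω, Y ω ∂P) + t ^ 2 / 8) := by
  have hYint : Integrable Y P := integrable_Icc01 P Y hm hb
  have hexpint := integrable_exp_mul_Icc01 P Y hm hb t
  set μm : ℝ := ∫ ω, Y ω ∂P with hμm
  have hμm0 : 0 ≤ μm := integral_nonneg fun ω => (hb ω).1
  have hμm1 : μm ≤ 1 := by
    have h := integral_mono hYint (integrable_const (1:ℝ)) (fun ω => (hb ω).2)
    simpa using h
  have hrhsint : Integrable (fun ω => 1 - Y ω + Y ω * exp t) P :=
    ((integrable_const (1:ℝ)).sub hYint).add (hYint.mul_const _)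
  have hpt : ∀ ω, exp (t * Y ω) ≤ 1 - Y ω + Y ω * exp t := fun ω =>
    convex_step t (Y ω) (hb ω)
  have h1 : mgf Y P t ≤ ∫ ω, (1 - Y ω + Y ω * exp t) ∂P :=
    integral_mono hexpint hrhsint hpt
  have h2 : ∫ ω, (1 - Y ω + Y ω * exp t) ∂P = 1 - μm + μm * exp t := by
    have heq : (fun ω => 1 - Y ω + Y ω * exp t) = fun ω => 1 + (exp t - 1) * Y ω := by
      ext ω; ring
    rw [heq, integral_add (integrable_const (1:ℝ)) (hYint.const_mul _),
      MeasureTheory.integral_const_mul, integral_const]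
    simp only [measure_univ, probReal_univ, ENNReal.toReal_one, smul_eq_mul, one_mul, ← hμm]
    ring
  calc mgf Y P t ≤ 1 - μm + μm * exp t := h2 ▸ h1
    _ ≤ exp (t * μm + t ^ 2 / 8) := key_ineq_s8 μm t ⟨hμm0, hμm1⟩

end Aux


/-- **Concrete LTT guarantee with Hoeffding p-values and fixed sequence testing.**
Hyperparameters are indexed by `Fin m` in a prespecified order `λ_1, ..., λ_m`.
With i.i.d. calibration data `Z_1, ..., Z_n`, empirical risks
`R̂(λ) = (1/n)∑ R(Z_i, λ)`, Hoeffding p-values `p_λ = exp(-2n((α - R̂(λ))_+)^2)`, and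
FST selection `Λ̂(ω) = {λ_i : ∀ j ≤ i, p_{λ_j}(ω) ≤ δ}`, all selected hyperparameters
satisfy `R(λ̂) ≤ α` with probability at least `1 - δ`. -/
theorem ltt_hoeffding_fst
    {Ω E : Type*} [MeasurableSpace Ω] [MeasurableSpace E]
    (P : Measure Ω) [IsProbabilityMeasure P]
    (m : ℕ)
    (α δ : ℝ) (hα : α ∈ Set.Ioo (0 : ℝ) 1) (hδ : δ ∈ Set.Ioo (0 : ℝ) 1)
    (n : ℕ) (hn : 0 < n) (Z : Fin n → Ω → E)
    (hmeas : ∀ i, Measurable (Z i))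
    (hindep : iIndepFun Z P)
    (μ : Measure E) [IsProbabilityMeasure μ]
    (hident : ∀ i, Measure.map (Z i) P = μ)
    (R : E → Fin m → ℝ) (hRmeas : ∀ lam, Measurable fun z => R z lam)
    (hR : ∀ z lam, R z lam ∈ Set.Icc (0 : ℝ) 1)
    (Ravg : Fin m → ℝ) (hRavg : Ravg = fun lam => ∫ z, R z lam ∂μ)
    (Rhat : Fin m → Ω → ℝ)
    (hRhat : Rhat = fun lam ω => (1 / (n : ℝ)) * ∑ i, R (Z i ω) lam)
    (p : Fin m → Ω → ℝ)
    (hp : p = fun lam ω => Real.exp (-2 * n * (max (α - Rhat lam ω) 0) ^ 2))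
    (Λhat : Ω → Set (Fin m))
    (hΛhat : Λhat = fun ω => {i | ∀ j ≤ i, p j ω ≤ δ}) :
    P {ω | ∀ lam ∈ Λhat ω, Ravg lam ≤ α} ≥ ENNReal.ofReal (1 - δ) := by
  classical
  by_cases hall : ∀ lam : Fin m, Ravg lam ≤ α
  · have hU : {ω | ∀ lam ∈ Λhat ω, Ravg lam ≤ α} = Set.univ :=
      Set.eq_univ_of_forall fun ω lam _ => hall lam
    rw [hU, measure_univ]
    exact ENNReal.ofReal_le_one.mpr (by linarith [hδ.1])
  · push_neg at hall
    obtain ⟨lam0, hlam0⟩ := hall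
    set s : Finset (Fin m) := Finset.univ.filter (fun lam => α < Ravg lam) with hs
    have hsne : s.Nonempty := ⟨lam0, by simp [hs, hlam0]⟩
    set j : Fin m := s.min' hsne with hj
    have hjlt : α < Ravg j := by
      have := s.min'_mem hsne
      simp [hs] at this
      exact this
    have hjmin : ∀ lam, α < Ravg lam → j ≤ lam := fun lam h =>
      s.min'_le lam (by simp [hs, h])
    have hnpos : (0:ℝ) < n := Nat.cast_pos.mpr hn
    -- the random variables
    set Y : Fin n → Ω → ℝ := fun i ω => R (Z i ω) j with hY
    have hYmeas : ∀ i, Measurable (Y i) := fun i => (hRmeas j).comp (hmeas i)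
    have hYindep : iIndepFun Y P :=
      hindep.comp (fun _ z => R z j) (fun _ => hRmeas j)
    have hYb : ∀ i ω, Y i ω ∈ Icc (0:ℝ) 1 := fun i ω => hR _ j
    have hYmean : ∀ i, ∫ ω, Y i ω ∂P = Ravg j := by
      intro i
      rw [hRavg]
      simp only
      rw [← hident i, integral_map (hmeas i).aemeasurable (hRmeas j).aestronglyMeasurable]
    -- epsilons
    set ε : ℝ := Real.sqrt (Real.log δ⁻¹ / (2 * n)) with hε
    have hlogpos : 0 < Real.log δ⁻¹ := Real.log_pos (one_lt_inv_iff₀.mpr ⟨hδ.1, hδ.2⟩)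
    have hεpos : 0 < ε := Real.sqrt_pos.mpr (by positivity)
    have hεsq : ε ^ 2 = Real.log δ⁻¹ / (2 * n) := Real.sq_sqrt (by positivity)
    set ε' : ℝ := Ravg j - α + ε with hε'
    have hε'ε : ε ≤ ε' := by simp only [hε']; linarith
    have hε'pos : 0 < ε' := lt_of_lt_of_le hεpos hε'ε
    set c : ℝ := n * α - n * ε with hc
    -- step B : bad ⊆ {S ≤ c}
    have hB : {ω | p j ω ≤ δ} ⊆ {ω | (∑ i, Y i) ω ≤ c} := by
      intro ω hω
      simp only [Set.mem_setOf_eq, hp] at hω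
      set t : ℝ := max (α - Rhat j ω) 0 with ht
      have ht0 : 0 ≤ t := le_max_right _ _
      have h1 : -2 * n * t ^ 2 ≤ Real.log δ :=
        (Real.le_log_iff_exp_le hδ.1).mpr hω
      have h2 : Real.log δ = - Real.log δ⁻¹ := by rw [Real.log_inv]; ring
      have h3 : Real.log δ⁻¹ / (2 * n) ≤ t ^ 2 := by
        rw [div_le_iff₀ (by positivity)]
        nlinarith [h1, h2]
      have h4 : ε ≤ t := by
        calc ε = Real.sqrt (Real.log δ⁻¹ / (2 * n)) := rfl
          _ ≤ Real.sqrt (t ^ 2) := Real.sqrt_le_sqrt h3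
          _ = t := by rw [Real.sqrt_sq ht0]
      have h5 : ε ≤ α - Rhat j ω := by
        rcases le_or_gt (α - Rhat j ω) 0 with h | h
        · have : t = 0 := max_eq_right h
          linarith [hεpos, this ▸ h4]
        · have : t = α - Rhat j ω := max_eq_left h.le
          linarith [this ▸ h4]
      have h6 : (∑ i, Y i) ω = n * Rhat j ω := by
        rw [hRhat]
        simp only [Finset.sum_apply, hY]
        field_simp
      rw [Set.mem_setOf_eq, h6, hc]
      nlinarith [h5]
    -- step C : Chernoff + Hoeffding
    have hC : P {ω | (∑ i, Y i) ω ≤ c} ≤ ENNReal.ofReal δ := by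
      set r : ℝ := 4 * ε' with hr
      have hrpos : 0 < r := by positivity
      have h_int : Integrable (fun ω => exp (-r * (∑ i, Y i) ω)) P :=
        hYindep.integrable_exp_mul_sum hYmeas
          (fun i _ => integrable_exp_mul_Icc01 P (Y i) (hYmeas i) (hYb i) (-r))
      have hcher := measure_le_le_exp_mul_mgf (μ := P) (X := ∑ i, Y i) c
        (neg_nonpos.mpr hrpos.le) h_int
      have hmgfsum : mgf (∑ i, Y i) P (-r) = ∏ i, mgf (Y i) P (-r) :=
        hYindep.mgf_sum hYmeas Finset.univ
      have hmgfi : ∀ i : Fin n, mgf (Y i) P (-r) ≤ exp (-r * Ravg j + r ^ 2 / 8) := by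
        intro i
        have := hoeffding_mgf_s8 P (Y i) (hYmeas i) (hYb i) (-r)
        rw [hYmean i] at this
        simpa using this
      have hprod : ∏ i : Fin n, mgf (Y i) P (-r) ≤ exp (n * (-r * Ravg j + r ^ 2 / 8)) := by
        calc ∏ i : Fin n, mgf (Y i) P (-r)
            ≤ ∏ _i : Fin n, exp (-r * Ravg j + r ^ 2 / 8) :=
              Finset.prod_le_prod (fun i _ => mgf_nonneg) (fun i _ => hmgfi i)
          _ = exp (-r * Ravg j + r ^ 2 / 8) ^ n := by
              rw [Finset.prod_const, Finset.card_univ, Fintype.card_fin]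
          _ = exp (n * (-r * Ravg j + r ^ 2 / 8)) := by rw [← Real.exp_nat_mul]
      have htoReal : (P {ω | (∑ i, Y i) ω ≤ c}).toReal ≤ δ := by
        calc (P {ω | (∑ i, Y i) ω ≤ c}).toReal
            ≤ exp (-(-r) * c) * mgf (∑ i, Y i) P (-r) := hcher
          _ ≤ exp (r * c) * exp (n * (-r * Ravg j + r ^ 2 / 8)) := by
              rw [neg_neg]
              exact mul_le_mul_of_nonneg_left (hmgfsum ▸ hprod) (exp_pos _).le
          _ = exp (r * c + n * (-r * Ravg j + r ^ 2 / 8)) := (Real.exp_add _ _).symm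
          _ ≤ exp (Real.log δ) := by
              rw [Real.exp_le_exp]
              have hexp : r * c + n * (-r * Ravg j + r ^ 2 / 8) = -2 * n * ε' ^ 2 := by
                rw [hc, hr, hε']; ring
              have hlog : Real.log δ = -2 * n * ε ^ 2 := by
                rw [hεsq, Real.log_inv]
                field_simp
              rw [hexp, hlog]
              nlinarith [mul_nonneg hnpos.le (mul_nonneg (sub_nonneg.2 hε'ε)
                (show (0:ℝ) ≤ ε' + ε by linarith))]
          _ = δ := Real.exp_log hδ.1
      exact (ENNReal.le_ofReal_iff_toReal_le (measure_ne_top P _) hδ.1.le).mpr htoReal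
    -- measurability of the bad set
    have hRhatmeas : Measurable (Rhat j) := by
      rw [hRhat]
      exact (Finset.measurable_sum Finset.univ
        (fun i _ => (hRmeas j).comp (hmeas i))).const_mul _
    have hpmeas : Measurable (p j) := by
      rw [hp]
      exact ((((measurable_const.sub hRhatmeas).max measurable_const).pow measurable_const
        ).const_mul _).exp
    have hbadmeas : MeasurableSet {ω | p j ω ≤ δ} :=
      measurableSet_le hpmeas measurable_const
    -- step D : combine
    have hsub : {ω | p j ω ≤ δ}ᶜ ⊆ {ω | ∀ lam ∈ Λhat ω, Ravg lam ≤ α} := by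
      intro ω hω lam hlam
      by_contra h
      push_neg at h
      rw [hΛhat] at hlam
      exact hω (hlam j (hjmin lam h))
    have hPbad : P {ω | p j ω ≤ δ} ≤ ENNReal.ofReal δ :=
      le_trans (measure_mono hB) hC
    calc ENNReal.ofReal (1 - δ) = 1 - ENNReal.ofReal δ := by
          rw [ENNReal.ofReal_sub 1 hδ.1.le, ENNReal.ofReal_one]
      _ ≤ 1 - P {ω | p j ω ≤ δ} := tsub_le_tsub_left hPbad 1
      _ = P {ω | p j ω ≤ δ}ᶜ := (prob_compl_eq_one_sub hbadmeas).symm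
      _ ≤ P {ω | ∀ lam ∈ Λhat ω, Ravg lam ≤ α} := measure_mono hsub
end

section
/- Let Λ be a nonempty finite set of hyperparameters with m = |Λ|, fix α, δ, q ∈ (0,1), and let Z_1, ..., Z_n be i.i.d. random variables with common distribution p_Z. For each λ let R(Z, λ) ∈ [0,1] be the risk on data point Z and R_q(λ) = inf{ r ≥ 0 : Pr_{Z∼p_Z}[R(Z,λ) ≤ r] ≥ 1 − q } the q-quantile risk. With ε = δ/m, define r_n = (1.4·log log(2.1 n) + log(10/ε)) / n and q* = q − 1.5·√(q(1−q)·r_n) − 0.8·r_n, assume 1 ≤ ⌊n(1−q*)⌋ ≤ n, and let R̂_{q*}(λ, ε) be the ⌊n(1−q*)⌋-th smallest element of { R(Z_1,λ), ..., R(Z_n,λ) }. Define Λ̂ = { λ ∈ Λ : R̂_{q*}(λ, δ/m) < α }. Then P[ R_q(λ̂) ≤ α for all λ̂ ∈ Λ̂ ] ≥ 1 − δ. -/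
open MeasureTheory ProbabilityTheory Real Set

section QLTTHelpers

private lemma exp_23_10_le : Real.exp (23/10) ≤ 10 := by
  have h1 : Real.exp (23/10) ^ (10:ℕ) = Real.exp 23 := by
    rw [← Real.exp_nat_mul]; norm_num
  have h2 : Real.exp 23 = Real.exp 1 ^ (23:ℕ) := by
    rw [← Real.exp_nat_mul]; norm_num
  have h3 : Real.exp 1 ^ (23:ℕ) ≤ (2.7182818286:ℝ) ^ (23:ℕ) :=
    pow_le_pow_left₀ (Real.exp_pos 1).le Real.exp_one_lt_d9.le 23
  have h4 : (2.7182818286:ℝ) ^ (23:ℕ) ≤ 10 ^ (10:ℕ) := by norm_num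
  have : Real.exp (23/10) ^ (10:ℕ) ≤ 10 ^ (10:ℕ) := by
    rw [h1, h2]; exact h3.trans h4
  exact le_of_pow_le_pow_left₀ (by norm_num) (by norm_num) this

private lemma exp_16_25_le : Real.exp (16/25) ≤ 2.1 := by
  have h1 : Real.exp (16/25) ^ (25:ℕ) = Real.exp 16 := by
    rw [← Real.exp_nat_mul]; norm_num
  have h2 : Real.exp 16 = Real.exp 1 ^ (16:ℕ) := by
    rw [← Real.exp_nat_mul]; norm_num
  have h3 : Real.exp 1 ^ (16:ℕ) ≤ (2.7182818286:ℝ) ^ (16:ℕ) :=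
    pow_le_pow_left₀ (Real.exp_pos 1).le Real.exp_one_lt_d9.le 16
  have h4 : (2.7182818286:ℝ) ^ (16:ℕ) ≤ (2.1:ℝ) ^ (25:ℕ) := by norm_num
  have : Real.exp (16/25) ^ (25:ℕ) ≤ (2.1:ℝ) ^ (25:ℕ) := by
    rw [h1, h2]; exact h3.trans h4
  exact le_of_pow_le_pow_left₀ (by norm_num) (by norm_num) this

private lemma exp_neg_half_le : Real.exp (-(1/2)) ≤ 16/25 := by
  have h : (25/16:ℝ) ≤ Real.exp (1/2) := by
    have h1 : Real.exp (1/2) ^ (2:ℕ) = Real.exp 1 := by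
      rw [← Real.exp_nat_mul]; norm_num
    have : (25/16:ℝ) ^ (2:ℕ) ≤ Real.exp (1/2) ^ (2:ℕ) := by
      rw [h1]; nlinarith [Real.exp_one_gt_d9]
    exact le_of_pow_le_pow_left₀ (by norm_num) (Real.exp_pos _).le this
  rw [Real.exp_neg]
  rw [inv_le_comm₀ (Real.exp_pos _) (by norm_num)] -- maybe wrong name
  calc (16/25:ℝ)⁻¹ = 25/16 := by norm_num
    _ ≤ Real.exp (1/2) := h

private lemma log_ten_ge : (23/10:ℝ) ≤ Real.log 10 :=
  (Real.le_log_iff_exp_le (by norm_num)).2 exp_23_10_le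

private lemma loglog_ge {y : ℝ} (hy : (2.1:ℝ) ≤ y) : -(1/2:ℝ) ≤ Real.log (Real.log y) := by
  have h1 : (16/25:ℝ) ≤ Real.log y := by
    rw [Real.le_log_iff_exp_le (by linarith)]
    exact exp_16_25_le.trans hy
  rw [Real.le_log_iff_exp_le (by linarith)]
  exact exp_neg_half_le.trans h1

/-- Bennett's lemma for a Bernoulli(a) variable. -/
private lemma bennett_bernoulli {a : ℝ} (ha0 : 0 < a) (ha1 : a < 1) {t : ℝ} (ht : 0 ≤ t) :
    Real.log (1 + a * (Real.exp t - 1)) ≤ a * t + a * (1 - a) * (Real.exp t - 1 - t) := by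
  set F : ℝ → ℝ := fun y => a * y + a * (1 - a) * (Real.exp y - 1 - y)
      - Real.log (1 + a * (Real.exp y - 1)) with hFdef
  have hpos : ∀ y : ℝ, 0 < 1 + a * (Real.exp y - 1) := by
    intro y; nlinarith [Real.exp_pos y]
  have hder : ∀ y : ℝ, HasDerivAt F
      (a + a * (1 - a) * (Real.exp y - 1) - a * Real.exp y / (1 + a * (Real.exp y - 1))) y := by
    intro y
    have h1 : HasDerivAt (fun y : ℝ => a * y) a y := by
      simpa using (hasDerivAt_id y).const_mul a
    have h2 : HasDerivAt (fun y : ℝ => a * (1 - a) * (Real.exp y - 1 - y))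
        (a * (1 - a) * (Real.exp y - 1)) y := by
      have : HasDerivAt (fun y : ℝ => Real.exp y - 1 - y) (Real.exp y - 1) y := by
        exact ((Real.hasDerivAt_exp y).sub_const 1).sub (hasDerivAt_id y)
      simpa [mul_comm] using this.const_mul (a * (1 - a))
    have h3 : HasDerivAt (fun y : ℝ => 1 + a * (Real.exp y - 1)) (a * Real.exp y) y := by
      have : HasDerivAt (fun y : ℝ => Real.exp y - 1) (Real.exp y) y :=
        (Real.hasDerivAt_exp y).sub_const 1
      simpa [mul_comm] using (this.const_mul a).const_add 1
    have h4 : HasDerivAt (fun y : ℝ => Real.log (1 + a * (Real.exp y - 1)))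
        (a * Real.exp y / (1 + a * (Real.exp y - 1))) y := h3.log (hpos y).ne'
    exact (h1.add h2).sub h4
  have hmono : MonotoneOn F (Set.Ici 0) := by
    apply monotoneOn_of_hasDerivWithinAt_nonneg (convex_Ici 0)
      (fun y _ => (hder y).continuousAt.continuousWithinAt)
      (fun y _ => (hder y).hasDerivWithinAt)
    intro y hy
    rw [interior_Ici] at hy
    have hw : (1:ℝ) ≤ Real.exp y := by
      rw [← Real.exp_zero]; exact Real.exp_le_exp.2 (le_of_lt hy)
    set w := Real.exp y
    have hP := hpos y
    rw [sub_nonneg, div_le_iff₀ hP]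
    nlinarith [mul_nonneg (mul_nonneg (mul_nonneg ha0.le ha0.le) (sub_nonneg.2 ha1.le))
      (sq_nonneg (w - 1))]
  have h0 : F 0 = 0 := by simp [hFdef]
  have := hmono (Set.self_mem_Ici) (ht) ht
  rw [h0] at this
  simpa [hFdef, sub_nonneg] using this

private lemma log_lb {x : ℝ} (hx : 0 ≤ x) :
    3 * x * (6 + x) / (2 * (3 + x) ^ 2) ≤ Real.log (1 + x) := by
  set F : ℝ → ℝ := fun y => Real.log (1 + y) - 3 * y * (6 + y) / (2 * (3 + y) ^ 2) with hFdef
  have hder : ∀ y : ℝ, 0 ≤ y → HasDerivAt F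
      (1 / (1 + y) - ((3 * (6 + y) + 3 * y) * (2 * (3 + y) ^ 2)
        - 3 * y * (6 + y) * (2 * (2 * (3 + y)))) / (2 * (3 + y) ^ 2) ^ 2) y := by
    intro y hy
    have h1 : HasDerivAt (fun y : ℝ => Real.log (1 + y)) (1 / (1 + y)) y := by
      have : HasDerivAt (fun y : ℝ => 1 + y) 1 y := by
        simpa using (hasDerivAt_id y).const_add 1
      simpa using this.log (by positivity)
    have hnum : HasDerivAt (fun y : ℝ => 3 * y * (6 + y)) (3 * (6 + y) + 3 * y) y := by
      have ha : HasDerivAt (fun y : ℝ => 3 * y) 3 y := by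
        simpa using (hasDerivAt_id y).const_mul 3
      have hb : HasDerivAt (fun y : ℝ => 6 + y) 1 y := by
        simpa using (hasDerivAt_id y).const_add 6
      have := ha.mul hb
      exact this.congr_deriv (by ring)
    have hden : HasDerivAt (fun y : ℝ => 2 * (3 + y) ^ 2) (2 * (2 * (3 + y))) y := by
      have hb : HasDerivAt (fun y : ℝ => 3 + y) 1 y := by
        simpa using (hasDerivAt_id y).const_add 3
      have := (hb.pow 2).const_mul 2
      exact this.congr_deriv (by ring)
    have hD : (2 * (3 + y) ^ 2) ≠ 0 := by positivity
    have := hnum.div hden hD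
    exact h1.sub this
  have hmono : MonotoneOn F (Set.Ici 0) := by
    apply monotoneOn_of_hasDerivWithinAt_nonneg (convex_Ici 0)
      (fun y hy => ((hder y hy).continuousAt).continuousWithinAt)
      (fun y hy => (hder y (le_of_lt (by rwa [interior_Ici] at hy))).hasDerivWithinAt)
    intro y hy
    rw [interior_Ici] at hy
    have hy0 : (0:ℝ) < y := hy
    rw [sub_nonneg, div_le_div_iff₀ (by positivity) (by positivity)]
    nlinarith [sq_nonneg y, sq_nonneg (3+y), hy0.le]
  have h0 : F 0 = 0 := by simp [hFdef]
  have := hmono Set.self_mem_Ici hx hx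
  rw [h0] at this
  simpa [hFdef, sub_nonneg] using this

private lemma entropy_lb {x : ℝ} (hx : 0 ≤ x) :
    3 * x ^ 2 / (2 * (3 + x)) ≤ (1 + x) * Real.log (1 + x) - x := by
  set F : ℝ → ℝ := fun y => (1 + y) * Real.log (1 + y) - y - 3 * y ^ 2 / (2 * (3 + y)) with hFdef
  have hder : ∀ y : ℝ, 0 ≤ y → HasDerivAt F
      (Real.log (1 + y) + (1 + y) * (1 / (1 + y)) - 1
        - (3 * (2 * y) * (2 * (3 + y)) - 3 * y ^ 2 * 2) / (2 * (3 + y)) ^ 2) y := by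
    intro y hy
    have hb : HasDerivAt (fun y : ℝ => 1 + y) 1 y := by
      simpa using (hasDerivAt_id y).const_add 1
    have hlog : HasDerivAt (fun y : ℝ => Real.log (1 + y)) (1 / (1 + y)) y := by
      simpa using hb.log (by positivity)
    have h1 : HasDerivAt (fun y : ℝ => (1 + y) * Real.log (1 + y))
        (Real.log (1 + y) + (1 + y) * (1 / (1 + y))) y := by
      have := hb.mul hlog
      exact this.congr_deriv (by ring)
    have hnum : HasDerivAt (fun y : ℝ => 3 * y ^ 2) (3 * (2 * y)) y := by
      have := ((hasDerivAt_id y).pow 2).const_mul 3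
      exact this.congr_deriv (by simp)
    have hden : HasDerivAt (fun y : ℝ => 2 * (3 + y)) 2 y := by
      have hb3 : HasDerivAt (fun y : ℝ => 3 + y) 1 y := by
        simpa using (hasDerivAt_id y).const_add 3
      simpa using hb3.const_mul 2
    have hD : (2 * (3 + y)) ≠ 0 := by positivity
    have h2 := hnum.div hden hD
    exact ((h1.sub (hasDerivAt_id y)).sub h2)
  have hmono : MonotoneOn F (Set.Ici 0) := by
    apply monotoneOn_of_hasDerivWithinAt_nonneg (convex_Ici 0)
      (fun y hy => ((hder y hy).continuousAt).continuousWithinAt)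
      (fun y hy => (hder y (le_of_lt (by rwa [interior_Ici] at hy))).hasDerivWithinAt)
    intro y hy
    rw [interior_Ici] at hy
    have hy0 : (0:ℝ) < y := hy
    have hlb := log_lb hy0.le
    have h1y : (1:ℝ) + y ≠ 0 := by positivity
    have : (1 + y) * (1 / (1 + y)) = 1 := by field_simp
    rw [this]
    have heq : Real.log (1+y) + 1 - 1 - (3 * (2 * y) * (2 * (3 + y)) - 3 * y ^ 2 * 2) / (2 * (3 + y)) ^ 2
        = Real.log (1+y) - 3 * y * (6 + y) / (2 * (3 + y) ^ 2) := by
      rw [sub_sub, sub_right_inj.symm]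
      field_simp
      ring
    rw [heq]
    linarith
  have h0 : F 0 = 0 := by simp [hFdef]
  have := hmono Set.self_mem_Ici hx hx
  rw [h0] at this
  simpa [hFdef, sub_nonneg] using this

/-- Step 6: the numeric inequality giving the Bernstein exponent ≥ L. -/
private lemma numeric_step (V u L s v : ℝ) (hV : 0 < V) (hL : 0 < L) (hs : L + 1.6 ≤ s)
    (hv : 0 ≤ v) (hv2 : v ^ 2 = V * s) (hu : 1.5 * v + 0.8 * s - 1 ≤ u) :
    L ≤ u ^ 2 / (2 * (V + u / 3)) := by
  have hs0 : (0:ℝ) < s := by linarith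
  have hu₀0 : (0:ℝ) < 1.5 * v + 0.8 * s - 1 := by nlinarith
  have hu0 : (0:ℝ) < u := by nlinarith
  rw [le_div_iff₀ (by positivity)]
  have hgoal : L * (2 * (V + u / 3)) * s ≤ u ^ 2 * s := by
    have hVs : V * s = v ^ 2 := hv2.symm
    have hbase : (s - 1.6) * (2 * (v ^ 2 + (1.5 * v + 0.8 * s - 1) * s / 3))
        ≤ (1.5 * v + 0.8 * s - 1) ^ 2 * s := by
      nlinarith [mul_nonneg (mul_nonneg hv hs0.le) (by nlinarith : (0:ℝ) ≤ s - 1),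
        mul_nonneg (mul_nonneg hs0.le (by nlinarith : (0:ℝ) ≤ 2*s+1))
          (by nlinarith : (0:ℝ) ≤ 4*s-5),
        mul_nonneg (mul_nonneg hv hv) hs0.le, mul_nonneg hv hv]
    have hstep : L * (2 * (v ^ 2 + u * s / 3)) ≤ u ^ 2 * s := by
      have hmonou : (0:ℝ) ≤ s * (u - (1.5 * v + 0.8 * s - 1))
          * (u + (1.5 * v + 0.8 * s - 1) - (2/3) * L) := by
        apply mul_nonneg (mul_nonneg hs0.le (by linarith))
        nlinarith
      have hLle : L * (2 * (v ^ 2 + (1.5 * v + 0.8 * s - 1) * s / 3))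
          ≤ (s - 1.6) * (2 * (v ^ 2 + (1.5 * v + 0.8 * s - 1) * s / 3)) := by
        apply mul_le_mul_of_nonneg_right (by linarith)
        positivity
      nlinarith [hbase, hLle, hmonou]
    calc L * (2 * (V + u / 3)) * s = L * (2 * (V * s + u * s / 3)) := by ring
      _ = L * (2 * (v ^ 2 + u * s / 3)) := by rw [hVs]
      _ ≤ u ^ 2 * s := hstep
  exact le_of_mul_le_mul_right (by linarith) hs0

/-- Steps 4–5: Bennett tail exponent dominates the Bernstein form. -/
private lemma bennett_tail (V u : ℝ) (hV : 0 < V) (hu : 0 < u) :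
    u ^ 2 / (2 * (V + u / 3)) ≤ (V + u) * Real.log (1 + u / V) - u := by
  have hx : 0 ≤ u / V := by positivity
  have h := entropy_lb hx
  have h1 : V * (3 * (u/V) ^ 2 / (2 * (3 + u/V))) ≤ V * ((1 + u/V) * Real.log (1 + u/V) - u/V) :=
    mul_le_mul_of_nonneg_left h hV.le
  have e1 : V * (3 * (u/V) ^ 2 / (2 * (3 + u/V))) = u ^ 2 / (2 * (V + u / 3)) := by
    rw [eq_div_iff (by positivity)]
    field_simp
  have e2 : V * ((1 + u/V) * Real.log (1 + u/V) - u/V) = (V + u) * Real.log (1 + u / V) - u := by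
    field_simp
  rw [e1, e2] at h1
  exact h1

set_option maxHeartbeats 1000000 in
/-- The full analytic core: the Chernoff bound value is at most `exp (-L)`. -/
private lemma chernoff_core (n k : ℕ) (p q L s v : ℝ)
    (hq0 : 0 < q) (hq1 : q < 1) (hn : 0 < n)
    (hp0 : 0 ≤ p) (hpq : p ≤ 1 - q)
    (hL : 0 < L) (hs : L + 1.6 ≤ s)
    (hv : 0 ≤ v) (hv2 : v ^ 2 = ((n:ℝ) * q * (1 - q)) * s)
    (hk : (n:ℝ) * (1 - q) + (1.5 * v + 0.8 * s - 1) ≤ k) :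
    ∃ t : ℝ, 0 ≤ t ∧
      Real.exp (-t * k) * (1 + p * (Real.exp t - 1)) ^ n ≤ Real.exp (-L) := by
  have hn0 : (0:ℝ) < n := Nat.cast_pos.2 hn
  set V : ℝ := (n:ℝ) * q * (1 - q) with hVdef
  set u : ℝ := (k:ℝ) - n * (1 - q) with hudef
  have hV : 0 < V := by
    have : 0 < 1 - q := by linarith
    positivity
  have hu_lb : 1.5 * v + 0.8 * s - 1 ≤ u := by rw [hudef]; linarith
  have hs0 : (0:ℝ) < s := by linarith
  have hu : 0 < u := by nlinarith
  have hxpos : (0:ℝ) < 1 + u / V := by positivity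
  refine ⟨Real.log (1 + u / V), Real.log_nonneg (by nlinarith [div_pos hu hV]), ?_⟩
  set t : ℝ := Real.log (1 + u / V) with htdef
  have ht0 : 0 ≤ t := Real.log_nonneg (by nlinarith [div_pos hu hV])
  have hw : Real.exp t = 1 + u / V := Real.exp_log hxpos
  have hw1 : 1 ≤ Real.exp t := by rw [hw]; nlinarith [div_pos hu hV]
  have h1 : (1 + p * (Real.exp t - 1)) ^ n ≤ (1 + (1 - q) * (Real.exp t - 1)) ^ n := by
    apply pow_le_pow_left₀ (by nlinarith) (by nlinarith)
  have h2 : (1 + (1 - q) * (Real.exp t - 1))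
      ≤ Real.exp ((1 - q) * t + (1 - q) * q * (Real.exp t - 1 - t)) := by
    have hb := bennett_bernoulli (a := 1 - q) (by linarith) (by linarith) ht0
    have hpos2 : 0 < 1 + (1 - q) * (Real.exp t - 1) := by nlinarith
    calc 1 + (1 - q) * (Real.exp t - 1)
        = Real.exp (Real.log (1 + (1 - q) * (Real.exp t - 1))) := (Real.exp_log hpos2).symm
      _ ≤ _ := by
          apply Real.exp_le_exp.2
          calc Real.log (1 + (1 - q) * (Real.exp t - 1))
              ≤ (1 - q) * t + (1 - q) * (1 - (1 - q)) * (Real.exp t - 1 - t) := hb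
            _ = (1 - q) * t + (1 - q) * q * (Real.exp t - 1 - t) := by ring
  have h3 : (1 + (1 - q) * (Real.exp t - 1)) ^ n
      ≤ Real.exp ((n:ℝ) * ((1 - q) * t + (1 - q) * q * (Real.exp t - 1 - t))) := by
    rw [Real.exp_nat_mul]
    exact pow_le_pow_left₀ (by nlinarith) h2 n
  have h4 : Real.exp (-t * k) * (1 + p * (Real.exp t - 1)) ^ n
      ≤ Real.exp (-t * k + (n:ℝ) * ((1 - q) * t + (1 - q) * q * (Real.exp t - 1 - t))) := by
    rw [Real.exp_add]
    exact mul_le_mul_of_nonneg_left (h1.trans h3) (Real.exp_pos _).le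
  have h5 : -t * k + (n:ℝ) * ((1 - q) * t + (1 - q) * q * (Real.exp t - 1 - t))
      = u - (V + u) * t := by
    rw [hw, hudef, hVdef]
    have hq1' : (1:ℝ) - q ≠ 0 := by linarith
    field_simp
    ring
  have h6 : u - (V + u) * t ≤ -L := by
    have hb := bennett_tail V u hV hu
    have hnum := numeric_step V u L s v hV hL hs hv hv2 hu_lb
    rw [htdef]
    linarith
  calc Real.exp (-t * k) * (1 + p * (Real.exp t - 1)) ^ n
      ≤ Real.exp (-t * k + (n:ℝ) * ((1 - q) * t + (1 - q) * q * (Real.exp t - 1 - t))) := h4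
    _ ≤ Real.exp (-L) := Real.exp_le_exp.2 (by rw [h5]; exact h6)

private lemma kthSmallest_lt_iff (l : List ℝ) (k : ℕ) (hk1 : 1 ≤ k) (hkn : k ≤ l.length)
    (α : ℝ) : kthSmallest l k < α ↔ k ≤ l.countP (fun x => decide (x < α)) := by
  set p : ℝ → Bool := fun x => decide (x < α) with hp
  set s : List ℝ := List.insertionSort (· ≤ ·) l with hs
  have hsorted : s.Pairwise (· ≤ ·) := List.pairwise_insertionSort _ l
  have hlen : s.length = l.length := List.length_insertionSort _ l
  have hcount : s.countP p = l.countP p := (List.perm_insertionSort _ l).countP_eq p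
  have hik : k - 1 < s.length := by omega
  have hval : kthSmallest l k = s[k-1] := List.getD_eq_getElem s 0 hik
  rw [hval, ← hcount]
  constructor
  · intro h
    have htk : (List.take k s).length = k := by
      rw [List.length_take]; omega
    have hall : ∀ a ∈ List.take k s, p a = true := by
      intro a ha
      obtain ⟨j, hj, rfl⟩ := List.mem_iff_getElem.1 ha
      rw [List.getElem_take]
      have hjk : j < k := by omega
      have hle : s[j] ≤ s[k-1] := by
        have := hsorted.rel_get_of_le (a := ⟨j, by omega⟩) (b := ⟨k-1, hik⟩)
          (by simp [Fin.le_def]; omega)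
        simpa [List.get_eq_getElem] using this
      simp [hp]
      linarith
    calc k = (List.take k s).length := htk.symm
      _ = (List.take k s).countP p := (List.countP_eq_length.2 hall).symm
      _ ≤ s.countP p := by
          conv_rhs => rw [← List.take_append_drop k s]
          rw [List.countP_append]; omega
  · intro h
    by_contra hc
    push_neg at hc
    have hdrop : (List.drop (k-1) s).countP p = 0 := by
      rw [List.countP_eq_zero]
      intro a ha
      obtain ⟨j, hj, rfl⟩ := List.mem_iff_getElem.1 ha
      have hjs : (k-1)+j < s.length := by rw [List.length_drop] at hj; omega
      rw [List.getElem_drop]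
      have hge : s[k-1] ≤ s[(k-1)+j] := by
        have := hsorted.rel_get_of_le (a := ⟨k-1, hik⟩)
          (b := ⟨(k-1)+j, hjs⟩) (by simp [Fin.le_def])
        simpa [List.get_eq_getElem] using this
      simp [hp]
      linarith
    have : s.countP p ≤ k - 1 := by
      conv_lhs => rw [← List.take_append_drop (k-1) s]
      rw [List.countP_append, hdrop]
      have := List.countP_le_length (p := p) (l := List.take (k-1) s)
      rw [List.length_take] at this
      omega
    omega

private lemma countP_ofFn_s10 {n : ℕ} (f : Fin n → ℝ) (p : ℝ → Bool) :
    (List.ofFn f).countP p = ∑ i : Fin n, if p (f i) then 1 else 0 := by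
  induction n with
  | zero => simp
  | succ n ih =>
    rw [List.ofFn_succ, List.countP_cons, ih (fun i => f i.succ), Fin.sum_univ_succ]
    by_cases h : p (f 0) <;> simp [h] <;> omega


private lemma indicator_chernoff
    {Ω : Type*} [MeasurableSpace Ω] (P : Measure Ω) [IsProbabilityMeasure P]
    (n : ℕ) (A : Fin n → Set Ω) (hA : ∀ i, MeasurableSet (A i))
    (hindep : iIndepFun
        (fun i => (A i).indicator (fun _ => (1:ℝ))) P)
    (p : ℝ) (hpA : ∀ i, (P (A i)).toReal = p)
    (k : ℕ) (t : ℝ) (ht : 0 ≤ t) :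
    (P {ω | (k:ℝ) ≤ ∑ i, (A i).indicator (fun _ => (1:ℝ)) ω}).toReal
      ≤ Real.exp (-t * k) * (1 + p * (Real.exp t - 1)) ^ n := by
  classical
  set X : Fin n → Ω → ℝ := fun i => (A i).indicator (fun _ => (1:ℝ)) with hX
  have hXm : ∀ i, Measurable (X i) := fun i => measurable_const.indicator (hA i)
  have hX0 : ∀ i ω, 0 ≤ X i ω := by
    intro i ω; rw [hX]; simp only [Set.indicator]; split <;> norm_num
  have hXle : ∀ i ω, X i ω ≤ 1 := by
    intro i ω; rw [hX]; simp only [Set.indicator]; split <;> norm_num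
  set S : Ω → ℝ := ∑ i, X i with hS
  have hSapp : ∀ ω, S ω = ∑ i, X i ω := fun ω => by
    rw [hS]; exact Finset.sum_apply ω Finset.univ X
  have hSm : Measurable S := by
    have h : Measurable fun ω => ∑ i, X i ω := Finset.measurable_sum _ (fun i _ => hXm i)
    have : S = fun ω => ∑ i, X i ω := funext hSapp
    rw [this]; exact h
  have hSle : ∀ ω, S ω ≤ n := by
    intro ω
    rw [hSapp]
    calc ∑ i, X i ω ≤ ∑ _i : Fin n, (1:ℝ) := Finset.sum_le_sum (fun i _ => hXle i ω)
      _ = n := by simp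
  have hint : Integrable (fun ω => Real.exp (t * S ω)) P := by
    apply Integrable.mono' (integrable_const (Real.exp (t * n)))
      ((hSm.const_mul t).exp.aestronglyMeasurable)
    filter_upwards with ω
    rw [Real.norm_eq_abs, Real.abs_exp]
    exact Real.exp_le_exp.2 (mul_le_mul_of_nonneg_left (hSle ω) ht)
  have hchern := measure_ge_le_exp_mul_mgf (μ := P) (X := S) (k:ℝ) ht hint
  have hmgf : mgf S P t = (1 + p * (Real.exp t - 1)) ^ n := by
    have hsum := hindep.mgf_sum (t := t) hXm Finset.univ
    have hone : ∀ i, mgf (X i) P t = 1 + p * (Real.exp t - 1) := by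
      intro i
      unfold mgf
      have heq : (fun ω => Real.exp (t * X i ω))
          = fun ω => (A i).indicator (fun _ => Real.exp t - 1) ω + 1 := by
        funext ω
        by_cases h : ω ∈ A i <;>
          simp [hX, Set.indicator_of_mem, Set.indicator_of_notMem, h]
      rw [heq, integral_add ((integrable_const _).indicator (hA i)) (integrable_const 1),
        integral_indicator_const _ (hA i), integral_const]
      simp [hpA i]
      rw [show P.real (A i) = p from hpA i]
      ring
    rw [hS, hsum, Finset.prod_congr rfl (fun i _ => hone i), Finset.prod_const,
      Finset.card_univ, Fintype.card_fin]
  have hset : {ω | (k:ℝ) ≤ ∑ i, (A i).indicator (fun _ => (1:ℝ)) ω} = {ω | (k:ℝ) ≤ S ω} := by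
    ext ω; rw [Set.mem_setOf_eq, Set.mem_setOf_eq, hSapp]
  rw [hset]
  calc (P {ω | (k:ℝ) ≤ S ω}).toReal ≤ Real.exp (-t * k) * mgf S P t := hchern
    _ = Real.exp (-t * k) * (1 + p * (Real.exp t - 1)) ^ n := by rw [hmgf]

end QLTTHelpers

/-- **Concrete QLTT guarantee with quantile-based tests and the Bonferroni correction.**
With `ε = δ/m`, empirical `q*`-quantiles `R̂_{q*}(λ, δ/m)` computed from i.i.d.
calibration data, and Bonferroni selection `Λ̂ = {λ : R̂_{q*}(λ, δ/m) < α}`, all selected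
hyperparameters satisfy `R_q(λ̂) ≤ α` with probability at least `1 - δ`. -/
theorem qltt_quantile_bonferroni
    {Ω E Λ : Type*} [MeasurableSpace Ω] [MeasurableSpace E]
    [Fintype Λ] [Nonempty Λ]
    (P : Measure Ω) [IsProbabilityMeasure P]
    (m : ℕ) (hm : m = Fintype.card Λ)
    (α δ q : ℝ) (hα : α ∈ Set.Ioo (0 : ℝ) 1) (hδ : δ ∈ Set.Ioo (0 : ℝ) 1)
    (hq : q ∈ Set.Ioo (0 : ℝ) 1)
    (n : ℕ) (hn : 0 < n) (Z : Fin n → Ω → E)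
    (hmeas : ∀ i, Measurable (Z i))
    (hindep : iIndepFun Z P)
    (μ : Measure E) [IsProbabilityMeasure μ]
    (hident : ∀ i, Measure.map (Z i) P = μ)
    (R : E → Λ → ℝ) (hRmeas : ∀ lam, Measurable fun z => R z lam)
    (hR : ∀ z lam, R z lam ∈ Set.Icc (0 : ℝ) 1)
    (ε rn qstar : ℝ) (k : ℕ)
    (hε : ε = δ / m)
    (hrn : rn = (1.4 * Real.log (Real.log (2.1 * n)) + Real.log (10 / ε)) / n)
    (hqstar : qstar = q - 1.5 * Real.sqrt (q * (1 - q) * rn) - 0.8 * rn)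
    (hk : k = ⌊(n : ℝ) * (1 - qstar)⌋₊)
    (hk1 : 1 ≤ k) (hkn : k ≤ n)
    (Rhatq : Λ → Ω → ℝ)
    (hRhatq : Rhatq = fun lam ω => kthSmallest (List.ofFn fun i => R (Z i ω) lam) k)
    (Λhat : Ω → Set Λ)
    (hΛhat : Λhat = fun ω => {lam | Rhatq lam ω < α}) :
    P {ω | ∀ lam ∈ Λhat ω, quantileRisk μ R lam q ≤ α} ≥ ENNReal.ofReal (1 - δ) := by
  classical
  obtain ⟨hα0, hα1⟩ := hα
  obtain ⟨hδ0, hδ1⟩ := hδ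
  obtain ⟨hq0, hq1⟩ := hq
  have hm1 : 1 ≤ m := by rw [hm]; exact Fintype.card_pos
  have hmR : (1:ℝ) ≤ m := Nat.one_le_cast.2 hm1
  have hε0 : 0 < ε := by rw [hε]; positivity
  have hε1 : ε < 1 := by
    rw [hε, div_lt_one (by linarith)]
    linarith
  have hn0 : (0:ℝ) < n := Nat.cast_pos.2 hn
  -- the exponent L and s = n * rn
  set L : ℝ := -Real.log ε with hLdef
  have hL0 : 0 < L := by
    rw [hLdef]
    exact neg_pos.2 (Real.log_neg hε0 hε1)
  set s : ℝ := (n:ℝ) * rn with hsdef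
  have hsval : s = 1.4 * Real.log (Real.log (2.1 * n)) + Real.log 10 + L := by
    rw [hsdef, hrn, hLdef]
    rw [Real.log_div (by norm_num) hε0.ne']
    field_simp
    ring
  have hsL : L + 1.6 ≤ s := by
    rw [hsval]
    have h10 := log_ten_ge
    have hll : -(1/2:ℝ) ≤ Real.log (Real.log (2.1 * n)) := by
      apply loglog_ge
      have h1n : (1:ℝ) ≤ (n:ℝ) := by exact_mod_cast hn
      nlinarith
    norm_num
    linarith
  have hrn0 : 0 ≤ rn := by
    rcases le_or_gt 0 rn with h | h
    · exact h
    · exfalso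
      have : s < 0 := by rw [hsdef]; exact mul_neg_of_pos_of_neg hn0 h
      linarith
  -- v
  set v : ℝ := (n:ℝ) * Real.sqrt (q * (1 - q) * rn) with hvdef
  have hv0 : 0 ≤ v := by
    rw [hvdef]; positivity
  have hv2 : v ^ 2 = ((n:ℝ) * q * (1 - q)) * s := by
    rw [hvdef, mul_pow, Real.sq_sqrt (mul_nonneg (mul_nonneg hq0.le (by linarith)) hrn0), hsdef]
    ring
  -- the floor bound on k
  have hkR : (n:ℝ) * (1 - q) + (1.5 * v + 0.8 * s - 1) ≤ (k:ℝ) := by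
    have hfl : (n:ℝ) * (1 - qstar) - 1 < (k:ℝ) := by
      rw [hk]
      exact Nat.sub_one_lt_floor ((n:ℝ) * (1 - qstar))
    have hqs : (n:ℝ) * (1 - qstar) = (n:ℝ) * (1 - q) + 1.5 * v + 0.8 * s := by
      rw [hqstar, hvdef, hsdef]
      ring
    linarith
  -- quantile fact: bad lam has small hitting probability
  have hquant : ∀ lam, α < quantileRisk μ R lam q →
      (μ {z | R z lam < α}).toReal ≤ 1 - q := by
    intro lam hlam
    have h1 : ¬ (1 - q ≤ (μ {z | R z lam ≤ α}).toReal) := by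
      intro hge
      have hbdd : BddBelow {r : ℝ | 0 ≤ r ∧ (μ {z | R z lam ≤ r}).toReal ≥ 1 - q} :=
        ⟨0, fun r hr => hr.1⟩
      have hmem : α ∈ {r : ℝ | 0 ≤ r ∧ (μ {z | R z lam ≤ r}).toReal ≥ 1 - q} := ⟨hα0.le, hge⟩
      have := csInf_le hbdd hmem
      rw [quantileRisk] at hlam
      linarith
    push_neg at h1
    refine le_trans ?_ h1.le
    have hsub : {z : E | R z lam < α} ⊆ {z : E | R z lam ≤ α} := by
      intro z hz
      simp only [Set.mem_setOf_eq] at *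
      exact le_of_lt hz
    exact ENNReal.toReal_mono (measure_ne_top μ _) (measure_mono hsub)
  -- the indicator sets and events
  set B : Λ → Set E := fun lam => {z | R z lam < α} with hBdef
  have hBmeas : ∀ lam, MeasurableSet (B lam) :=
    fun lam => measurableSet_lt (hRmeas lam) measurable_const
  set A : Λ → Fin n → Set Ω := fun lam i => Z i ⁻¹' (B lam) with hAdef
  have hAmeas : ∀ lam i, MeasurableSet (A lam i) := fun lam i => (hmeas i) (hBmeas lam)
  set Ev : Λ → Set Ω := fun lam =>
    {ω | (k:ℝ) ≤ ∑ i, (A lam i).indicator (fun _ => (1:ℝ)) ω} with hEvdef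
  have hEvMeas : ∀ lam, MeasurableSet (Ev lam) := by
    intro lam
    have hSm : Measurable fun ω => ∑ i, (A lam i).indicator (fun _ => (1:ℝ)) ω :=
      Finset.measurable_sum _ (fun i _ => measurable_const.indicator (hAmeas lam i))
    exact measurableSet_le measurable_const hSm
  -- independence of the indicators
  have hAindep : ∀ lam, iIndepFun
      (fun i => (A lam i).indicator (fun _ => (1:ℝ))) P := by
    intro lam
    have hcomp := hindep.comp (fun _ => (B lam).indicator (fun _ => (1:ℝ)))
      (fun _ => measurable_const.indicator (hBmeas lam))
    have heq : (fun (i : Fin n) => (A lam i).indicator (fun _ => (1:ℝ)))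
        = fun i => ((B lam).indicator (fun _ => (1:ℝ))) ∘ (Z i) := by
      funext i ω
      by_cases h : Z i ω ∈ B lam <;>
        simp [hAdef, Function.comp, Set.indicator, h, Set.mem_preimage]
    rw [heq]
    exact hcomp
  -- common hitting probability
  set p : Λ → ℝ := fun lam => (μ (B lam)).toReal with hpdef
  have hpA : ∀ lam i, (P (A lam i)).toReal = p lam := by
    intro lam i
    rw [hAdef, hpdef]
    congr 1
    rw [← Measure.map_apply (hmeas i) (hBmeas lam), hident i]
  have hp0 : ∀ lam, 0 ≤ p lam := fun lam => ENNReal.toReal_nonneg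
  -- per-lambda probability bound
  have hEvBound : ∀ lam, α < quantileRisk μ R lam q → P (Ev lam) ≤ ENNReal.ofReal ε := by
    intro lam hlam
    obtain ⟨t, ht0, hcb⟩ := chernoff_core n k (p lam) q L s v hq0 hq1 hn (hp0 lam)
      (hquant lam hlam) hL0 hsL hv0 hv2 hkR
    have h1 := indicator_chernoff P n (A lam) (hAmeas lam) (hAindep lam) (p lam)
      (hpA lam) k t ht0
    have h2 : (P (Ev lam)).toReal ≤ ε := by
      have hLε : Real.exp (-L) = ε := by
        rw [hLdef, neg_neg, Real.exp_log hε0]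
      calc (P (Ev lam)).toReal ≤ Real.exp (-t * k) * (1 + p lam * (Real.exp t - 1)) ^ n := h1
        _ ≤ Real.exp (-L) := hcb
        _ = ε := hLε
    calc P (Ev lam) = ENNReal.ofReal (P (Ev lam)).toReal :=
          (ENNReal.ofReal_toReal (measure_ne_top P _)).symm
      _ ≤ ENNReal.ofReal ε := ENNReal.ofReal_le_ofReal h2
  -- the event characterization
  have hEvIff : ∀ lam ω, Rhatq lam ω < α ↔ ω ∈ Ev lam := by
    intro lam ω
    rw [hRhatq]
    have hlen : (List.ofFn fun i => R (Z i ω) lam).length = n := List.length_ofFn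
    rw [kthSmallest_lt_iff _ k hk1 (by rw [hlen]; exact hkn) α, countP_ofFn_s10]
    have hcast : ((∑ i : Fin n, if (fun x => decide (x < α)) (R (Z i ω) lam) then 1 else 0 : ℕ) : ℝ)
        = ∑ i, (A lam i).indicator (fun _ => (1:ℝ)) ω := by
      push_cast
      refine Finset.sum_congr rfl (fun i _ => ?_)
      by_cases h : R (Z i ω) lam < α <;>
        simp [hAdef, hBdef, Set.indicator, Set.mem_preimage, h]
    rw [hEvdef]
    simp only [Set.mem_setOf_eq]
    rw [← hcast]
    exact Nat.cast_le.symm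
  -- the Bonferroni bad set
  set Bad : Finset Λ := Finset.univ.filter (fun lam => α < quantileRisk μ R lam q) with hBad
  -- rewrite the target event
  have hTeq : {ω | ∀ lam ∈ Λhat ω, quantileRisk μ R lam q ≤ α}
      = ⋂ lam ∈ Bad, (Ev lam)ᶜ := by
    ext ω
    simp only [hΛhat, Set.mem_setOf_eq, Set.mem_iInter, Set.mem_compl_iff, hBad,
      Finset.mem_filter, Finset.mem_univ, true_and]
    constructor
    · intro h lam hlam hEv
      have := h lam ((hEvIff lam ω).2 hEv)
      linarith
    · intro h lam hR
      by_contra hcon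
      push_neg at hcon
      exact h lam hcon ((hEvIff lam ω).1 hR)
  rw [hTeq]
  -- union bound
  have hUnion : P (⋃ lam ∈ Bad, Ev lam) ≤ ENNReal.ofReal δ := by
    calc P (⋃ lam ∈ Bad, Ev lam) ≤ ∑ lam ∈ Bad, P (Ev lam) :=
          measure_biUnion_finset_le Bad Ev
      _ ≤ ∑ _lam ∈ Bad, ENNReal.ofReal ε := by
          apply Finset.sum_le_sum
          intro lam hlam
          rw [hBad, Finset.mem_filter] at hlam
          exact hEvBound lam hlam.2
      _ = (Bad.card : ENNReal) * ENNReal.ofReal ε := by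
          rw [Finset.sum_const, nsmul_eq_mul]
      _ ≤ (m : ENNReal) * ENNReal.ofReal ε := by
          apply mul_le_mul_left
          have : Bad.card ≤ m := by
            rw [hm]
            exact le_trans (Finset.card_filter_le _ _) (le_of_eq (Finset.card_univ))
          exact_mod_cast Nat.cast_le.2 this
      _ = ENNReal.ofReal δ := by
          rw [← ENNReal.ofReal_natCast m, ← ENNReal.ofReal_mul (by positivity)]
          congr 1
          rw [hε]
          field_simp
  have hIeq : (⋂ lam ∈ Bad, (Ev lam)ᶜ) = (⋃ lam ∈ Bad, Ev lam)ᶜ := by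
    simp [Set.compl_iUnion]
  rw [hIeq]
  have hUmeas : MeasurableSet (⋃ lam ∈ Bad, Ev lam) :=
    (Bad : Finset Λ).measurableSet_biUnion (fun lam _ => hEvMeas lam)
  rw [prob_compl_eq_one_sub hUmeas]
  have h1 : ENNReal.ofReal (1 - δ) + ENNReal.ofReal δ = 1 := by
    rw [← ENNReal.ofReal_add (by linarith) hδ0.le]
    norm_num
  calc ENNReal.ofReal (1 - δ) ≤ 1 - ENNReal.ofReal δ :=
        ENNReal.le_sub_of_add_le_right ENNReal.ofReal_ne_top h1.le
    _ ≤ 1 - P (⋃ lam ∈ Bad, Ev lam) := tsub_le_tsub_left hUnion 1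
end
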